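/- arXiv:1205.4892 — 11 statements merged into one kernel-verified Lean document; each statement's English description precedes it below -/
import Mathlib

section
/- For all s1, s2 in the factorization semigroup S(G,O), one has s1·s2 = ρ(α(s1))(s2)·s1, where α is the product homomorphism and ρ is the simultaneous conjugation action. -/
/-- The defining relations of the factorization semigroup `S(G,O)`:
`x_{g₁} ⬝ x_{g₂} = x_{g₂} ⬝ x_{g₂⁻¹ g₁ g₂}`. -/
inductive FactRel (G : Type) [Group G] (O : Set G) :
    FreeSemigroup {g : G // g ∈ O} → FreeSemigroup {g : G // g ∈ O} → Prop
  | rel (g₁ g₂ : {g : G // g ∈ O}) (h : (g₂ : G)⁻¹ * g₁ * g₂ ∈ O) :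
      FactRel G O (FreeSemigroup.of g₁ * FreeSemigroup.of g₂)
        (FreeSemigroup.of g₂ * FreeSemigroup.of ⟨(g₂ : G)⁻¹ * g₁ * g₂, h⟩)

/-- The factorization semigroup `S(G,O)`. -/
def FactS (G : Type) [Group G] (O : Set G) :=
  (conGen (FactRel G O)).Quotient

instance (G : Type) [Group G] (O : Set G) : Semigroup (FactS G O) :=
  Con.semigroup _

/-- The generator `x_g` of `S(G,O)`. -/
def xg {G : Type} [Group G] {O : Set G} (g : {g : G // g ∈ O}) : FactS G O :=
  (conGen (FactRel G O)).toQuotient (FreeSemigroup.of g)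

theorem stmt2 (G : Type) [Group G] (O : Set G) (h1 : (1 : G) ∉ O)
    (hO : ∀ g ∈ O, ∀ h : G, h⁻¹ * g * h ∈ O)
    (α : FactS G O →ₙ* G) (hα : ∀ g : {g : G // g ∈ O}, α (xg g) = (g : G))
    (ρ : G →* MulAut (FactS G O))
    (hρ : ∀ (h : G) (g : G) (hg : g ∈ O),
      ρ h (xg ⟨g, hg⟩) = xg ⟨h * g * h⁻¹, by simpa using hO g hg h⁻¹⟩) :
    ∀ s₁ s₂ : FactS G O, s₁ * s₂ = ρ (α s₁) s₂ * s₁ := by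
  have hmul : ∀ u v : FreeSemigroup {g : G // g ∈ O},
      ((conGen (FactRel G O)).toQuotient (u * v) : FactS G O)
      = ((conGen (FactRel G O)).toQuotient u : FactS G O)
        * ((conGen (FactRel G O)).toQuotient v : FactS G O) := fun _ _ => rfl
  have key : ∀ (g : {g : G // g ∈ O}) (t : FactS G O),
      xg g * t = ρ (g : G) t * xg g := by
    intro g t
    induction t using Con.induction_on with
    | H y =>
      induction y using FreeSemigroup.recOnMul with
      | ih1 b =>
        show xg g * xg b = (ρ (g : G)) (xg b) * xg g
        have hb' : (g : G) * b * (g : G)⁻¹ ∈ O := by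
          simpa using hO b b.2 (g : G)⁻¹
        have hxb : (ρ (g : G)) (xg b) = xg ⟨(g : G) * b * (g : G)⁻¹, hb'⟩ := by
          have := hρ (g : G) (b : G) b.2
          simpa using this
        rw [hxb]
        have hc : (⟨(g : G)⁻¹ * ((g : G) * b * (g : G)⁻¹) * g,
            hO _ hb' (g : G)⟩ : {g : G // g ∈ O}) = b := by
          ext; group
        have hrel := ConGen.Rel.of _ _
          (FactRel.rel (⟨(g : G) * b * (g : G)⁻¹, hb'⟩ : {g : G // g ∈ O}) g
            (hO _ hb' (g : G)))
        rw [hc] at hrel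
        exact ((Con.eq _).2 hrel).symm
      | ih2 a b iha ihb =>
        erw [hmul, ← mul_assoc, iha, mul_assoc, ihb, ← mul_assoc, ← map_mul]
        rfl
  intro s₁
  induction s₁ using Con.induction_on with
  | H y =>
    induction y using FreeSemigroup.recOnMul with
    | ih1 g =>
      intro s₂
      show xg g * s₂ = ρ (α (xg g)) s₂ * xg g
      rw [hα g]
      exact key g s₂
    | ih2 a b iha ihb =>
      intro s₂
      erw [hmul, mul_assoc, ihb, ← mul_assoc, iha, mul_assoc,
        ← MulAut.mul_apply, ← map_mul ρ, ← map_mul α, ← hmul]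
end

section
/- For all s1, s2 in the factorization semigroup S(G,O), one has s1·s2 = s2·ρ(α(s2)^{-1})(s1). -/
theorem stmt3 (G : Type) [Group G] (O : Set G) (h1 : (1 : G) ∉ O)
    (hO : ∀ g ∈ O, ∀ h : G, h⁻¹ * g * h ∈ O)
    (α : FactS G O →ₙ* G) (hα : ∀ g : {g : G // g ∈ O}, α (xg g) = (g : G))
    (ρ : G →* MulAut (FactS G O))
    (hρ : ∀ (h : G) (g : G) (hg : g ∈ O),
      ρ h (xg ⟨g, hg⟩) = xg ⟨h * g * h⁻¹, by simpa using hO g hg h⁻¹⟩) :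
    ∀ s₁ s₂ : FactS G O, s₁ * s₂ = s₂ * ρ ((α s₂)⁻¹) s₁ := by
  -- Key lemma: commuting past a single generator
  have key : ∀ (g : {g : G // g ∈ O}) (s₁ : FactS G O),
      s₁ * xg g = xg g * ρ ((g : G)⁻¹) s₁ := by
    intro g s₁
    induction s₁ using Con.induction_on with
    | H w =>
      induction w using FreeSemigroup.recOnMul with
      | ih1 g₁ =>
        have hmem : (g : G)⁻¹ * g₁ * g ∈ O := hO g₁ g₁.2 g
        have hrel : (conGen (FactRel G O)).toQuotient
            (FreeSemigroup.of g₁ * FreeSemigroup.of g) =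
            (conGen (FactRel G O)).toQuotient
            (FreeSemigroup.of g * FreeSemigroup.of ⟨(g : G)⁻¹ * g₁ * g, hmem⟩) :=
          Con.eq _ |>.2 (ConGen.Rel.of _ _ (FactRel.rel g₁ g hmem))
        have hρ' : ρ ((g : G)⁻¹) (xg g₁) = xg ⟨(g : G)⁻¹ * g₁ * g, hmem⟩ := by
          have := hρ ((g : G)⁻¹) g₁ g₁.2
          simpa using this
        show xg g₁ * xg g = xg g * ρ ((g : G)⁻¹) (xg g₁)
        rw [hρ']
        exact hrel
      | ih2 x y hx hy =>
        set a : FactS G O := (conGen (FactRel G O)).toQuotient (FreeSemigroup.of x) with ha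
        set b : FactS G O := (conGen (FactRel G O)).toQuotient y with hb
        show (a * b) * xg g = xg g * ρ ((g : G)⁻¹) (a * b)
        rw [map_mul, mul_assoc, hy, ← mul_assoc, hx, mul_assoc]
  intro s₁ s₂
  induction s₂ using Con.induction_on generalizing s₁ with
  | H w =>
    induction w using FreeSemigroup.recOnMul generalizing s₁ with
    | ih1 g =>
      have : α (xg g) = (g : G) := hα g
      show s₁ * xg g = xg g * ρ ((α (xg g))⁻¹) s₁
      rw [this]
      exact key g s₁
    | ih2 x y hx hy =>
      set a : FactS G O := (conGen (FactRel G O)).toQuotient (FreeSemigroup.of x) with ha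
      set b : FactS G O := (conGen (FactRel G O)).toQuotient y with hb
      show s₁ * (a * b) = (a * b) * ρ ((α (a * b))⁻¹) s₁
      rw [← mul_assoc, hx s₁, mul_assoc, hy, ← mul_assoc]
      congr 1
      rw [map_mul, mul_inv_rev, map_mul]
      rfl
end

section
/- If s ∈ S(G,O) satisfies that α(s) belongs to the center of the subgroup G_s generated by the factors of s, then for every g ∈ G_s the simultaneous conjugation ρ(g) fixes s. -/
/-- The element of `S(G,O)` given by the word `x_{g} ⬝ x_{g₁} ⬝ ... ⬝ x_{gₖ}`. -/
def wordOf {G : Type} [Group G] {O : Set G} (g : {g : G // g ∈ O})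
    (gs : List {g : G // g ∈ O}) : FactS G O :=
  gs.foldl (fun s h => s * xg h) (xg g)

namespace FactAux

variable {G : Type} [Group G] {O : Set G}

/-- quotient map -/
def qm : FreeSemigroup {g : G // g ∈ O} → FactS G O := (conGen (FactRel G O)).toQuotient

theorem qm_mul (x y : FreeSemigroup {g : G // g ∈ O}) : qm (x * y) = qm x * qm y :=
  Con.coe_mul x y

theorem qm_of (g : {g : G // g ∈ O}) : qm (FreeSemigroup.of g) = xg g := rfl

theorem factS_rel (g₁ g₂ : {g : G // g ∈ O}) (h : (g₂ : G)⁻¹ * g₁ * g₂ ∈ O) :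
    xg g₁ * xg g₂ = xg g₂ * xg ⟨(g₂ : G)⁻¹ * g₁ * g₂, h⟩ := by
  rw [← qm_of, ← qm_of, ← qm_of, ← qm_mul, ← qm_mul]
  exact (Con.eq _).mpr (ConGen.Rel.of _ _ (FactRel.rel g₁ g₂ h))

theorem factS_ind (motive : FactS G O → Prop) (h1 : ∀ g, motive (xg g))
    (h2 : ∀ (g) (y : FactS G O), motive (xg g) → motive y → motive (xg g * y)) :
    ∀ s, motive s := by
  intro s
  induction s using Con.induction_on with
  | H x =>
    induction x using FreeSemigroup.recOnMul with
    | ih1 g => exact h1 g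
    | ih2 x y hx hy =>
        show motive (qm (FreeSemigroup.of x * y))
        rw [qm_mul]
        exact h2 x (qm y) hx hy

def facs (w : FreeSemigroup {g : G // g ∈ O}) : List {g : G // g ∈ O} := w.head :: w.tail

theorem facs_of (h : {g : G // g ∈ O}) : facs (FreeSemigroup.of h) = [h] := rfl

theorem facs_mul_of (h : {g : G // g ∈ O}) (y : FreeSemigroup {g : G // g ∈ O}) :
    facs (FreeSemigroup.of h * y) = h :: facs y := rfl

theorem mem_conj (hO : ∀ g ∈ O, ∀ h : G, h⁻¹ * g * h ∈ O) (d : G) (k : {g : G // g ∈ O}) :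
    d * (k : G) * d⁻¹ ∈ O := by
  simpa using hO (k : G) k.2 d⁻¹

section

variable (hO : ∀ g ∈ O, ∀ h : G, h⁻¹ * g * h ∈ O)
variable (α : FactS G O →ₙ* G) (hα : ∀ g : {g : G // g ∈ O}, α (xg g) = (g : G))
variable (ρ : G →* MulAut (FactS G O))
variable (hρ : ∀ (h : G) (g : G) (hg : g ∈ O),
      ρ h (xg ⟨g, hg⟩) = xg ⟨h * g * h⁻¹, by simpa using hO g hg h⁻¹⟩)

include hO hα hρ

omit hα in
theorem rho_xg (d : G) (k : {g : G // g ∈ O}) :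
    ρ d (xg k) = xg ⟨d * (k : G) * d⁻¹, mem_conj hO d k⟩ := hρ d (k : G) k.2

omit hα in
theorem rho_fix (k : {g : G // g ∈ O}) : ρ (k : G) (xg k) = xg k := by
  rw [rho_xg hO ρ hρ]
  exact congrArg xg (Subtype.ext (by group))

omit hα in
theorem L1 (u : FactS G O) (k : {g : G // g ∈ O}) :
    u * xg k = xg k * ρ ((k : G)⁻¹) u := by
  induction u using factS_ind with
  | h1 g =>
      rw [factS_rel g k (hO g g.2 k), rho_xg hO ρ hρ]
      exact congrArg (xg k * xg ·) (Subtype.ext (by group))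
  | h2 g y hg hy =>
      rw [mul_assoc, hy, ← mul_assoc, hg, mul_assoc, ← map_mul]

/-- L2 -/
theorem L2 (v u : FactS G O) : u * v = v * ρ ((α v)⁻¹) u := by
  induction v using factS_ind generalizing u with
  | h1 k => rw [hα, L1 hO ρ hρ]
  | h2 g y hg hy =>
      rw [← mul_assoc, L1 hO ρ hρ u g, mul_assoc, hy, ← mul_assoc,
        ← MulAut.mul_apply, ← map_mul, map_mul α, hα, mul_inv_rev]

/-- L0 -/
theorem L0 (d : G) (s : FactS G O) : α (ρ d s) = d * α s * d⁻¹ := by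
  induction s using factS_ind with
  | h1 g => rw [rho_xg hO ρ hρ, hα, hα]
  | h2 g y hg hy => rw [map_mul, map_mul, map_mul, hg, hy]; group

/-- L3 : `ρ (α s) s = s` -/
theorem L3 (s : FactS G O) : ρ (α s) s = s := by
  induction s using factS_ind with
  | h1 g => rw [hα]; exact rho_fix hO ρ hρ g
  | h2 g y hg hy =>
      rw [show α (xg g * y) = (g : G) * α y by rw [map_mul, hα], map_mul]
      have e1 : ρ ((g : G) * α y) (xg g) = ρ (g : G) (ρ (α y) (xg g)) := by
        rw [← MulAut.mul_apply, ← map_mul]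
      have e2 : ρ ((g : G) * α y) y = ρ (g : G) y := by
        rw [map_mul, MulAut.mul_apply, hy]
      rw [e1, e2]
      rw [L2 hO α hα ρ hρ (ρ (g : G) y) (ρ (g : G) (ρ (α y) (xg g)))]
      have e3 : α (ρ (g : G) y) = (g : G) * α y * (g : G)⁻¹ := L0 hO α hα ρ hρ _ _
      rw [e3]
      have e4 : ρ (((g : G) * α y * (g : G)⁻¹)⁻¹) (ρ (g : G) (ρ (α y) (xg g)))
          = ρ (g : G) (xg g) := by
        rw [← MulAut.mul_apply, ← map_mul, ← MulAut.mul_apply, ← map_mul]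
        congr 1
        group
      rw [e4, rho_fix hO ρ hρ g, L1 hO ρ hρ (ρ (g : G) y) g,
        ← MulAut.mul_apply, ← map_mul, inv_mul_cancel, map_one, MulAut.one_apply]

/-- L4 (B') -/
theorem L4 (u : FactS G O) (k : {g : G // g ∈ O})
    (hc : Commute (α (u * xg k)) (k : G)) : ρ (k : G) (u * xg k) = u * xg k := by
  have hak : α (u * xg k) = α u * (k : G) := by rw [map_mul, hα]
  have hc2 : α u * (k : G) = (k : G) * α u := by
    have h := hc.eq
    rw [hak] at h
    exact mul_right_cancel (h.trans (mul_assoc _ _ _).symm)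
  have h5 : ρ (k : G) u = ρ (α (u * xg k)) u := by
    conv_lhs => rw [← L3 hO α hα ρ hρ u]
    rw [← MulAut.mul_apply, ← map_mul, ← hc2, hak]
  have h6 : ρ (α (u * xg k)) (xg k) = xg k := by
    rw [rho_xg hO ρ hρ]
    refine congrArg xg (Subtype.ext ?_)
    show α (u * xg k) * (k : G) * (α (u * xg k))⁻¹ = (k : G)
    rw [hc.eq]
    group
  calc ρ (k : G) (u * xg k) = ρ (k : G) u * ρ (k : G) (xg k) := map_mul _ _ _
    _ = ρ (α (u * xg k)) u * ρ (α (u * xg k)) (xg k) := by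
        rw [h5, rho_fix hO ρ hρ, h6]
    _ = ρ (α (u * xg k)) (u * xg k) := (map_mul _ _ _).symm
    _ = u * xg k := L3 hO α hα ρ hρ _

omit hO hα hρ in
theorem rho_inv (g : G) (s : FactS G O) (h : ρ g s = s) : ρ g⁻¹ s = s := by
  calc ρ g⁻¹ s = ρ g⁻¹ (ρ g s) := by rw [h]
    _ = ρ (g⁻¹ * g) s := by rw [map_mul, MulAut.mul_apply]
    _ = s := by rw [inv_mul_cancel, map_one, MulAut.one_apply]

omit hO hρ in
theorem alpha_mem (K : Subgroup G) :
    ∀ w : FreeSemigroup {g : G // g ∈ O}, (∀ c ∈ facs w, (c : G) ∈ K) → α (qm w) ∈ K := by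
  intro w
  induction w with
  | ih1 h => intro hf; rw [qm_of, hα]; exact hf h (by simp [facs_of])
  | ih2 h y ihh ihy =>
      intro hf
      rw [qm_mul, map_mul, qm_of, hα]
      exact mul_mem (hf h (by rw [facs_mul_of]; exact List.mem_cons_self))
        (ihy fun c hc => hf c (by rw [facs_mul_of]; exact List.mem_cons_of_mem _ hc))

theorem fix_prod :
    ∀ (w : FreeSemigroup {g : G // g ∈ O}) (d : G) (s : FactS G O),
      (∀ c ∈ facs w, ρ (d * (c : G) * d⁻¹) s = s) → ρ (d * α (qm w) * d⁻¹) s = s := by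
  intro w
  induction w with
  | ih1 h => intro d s hf; rw [qm_of, hα]; exact hf h (by simp [facs_of])
  | ih2 h y ihh ihy =>
      intro d s hf
      rw [qm_mul, map_mul α, qm_of, hα]
      have e : d * ((h : G) * α (qm y)) * d⁻¹
          = (d * (h : G) * d⁻¹) * (d * α (qm y) * d⁻¹) := by group
      rw [e, map_mul, MulAut.mul_apply]
      rw [ihy d s fun c hc => hf c (by rw [facs_mul_of]; exact List.mem_cons_of_mem _ hc)]
      exact hf h (by rw [facs_mul_of]; exact List.mem_cons_self)

theorem key :
    ∀ (w : FreeSemigroup {g : G // g ∈ O}) (K : Subgroup G) (d : G), d ∈ K →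
      ∀ s : FactS G O, (s = ρ d (qm w) ∨ ∃ u, s = u * ρ d (qm w)) →
      α s ∈ Subgroup.centralizer (K : Set G) →
      (∀ c ∈ facs w, (c : G) ∈ K) →
      ∀ c ∈ facs w, ρ (d * (c : G) * d⁻¹) s = s := by
  intro w
  induction w with
  | ih1 h =>
      intro K d hd s hs hcent hfac c hc
      rw [facs_of, List.mem_singleton] at hc
      subst hc
      have hck : (d * (c : G) * d⁻¹) ∈ K :=
        mul_mem (mul_mem hd (hfac c (by simp [facs_of]))) (inv_mem hd)
      rcases hs with rfl | ⟨u, rfl⟩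
      · rw [qm_of, rho_xg hO ρ hρ]
        exact rho_fix hO ρ hρ ⟨d * (c : G) * d⁻¹, mem_conj hO d c⟩
      · rw [qm_of, rho_xg hO ρ hρ]
        refine L4 hO α hα ρ hρ u ⟨d * (c : G) * d⁻¹, mem_conj hO d c⟩ ?_
        have h2 := (Subgroup.mem_centralizer_iff.mp hcent) _ hck
        rw [show qm (FreeSemigroup.of c) = xg c from rfl, rho_xg hO ρ hρ] at h2
        exact h2.symm
  | ih2 h y ihh ihy =>
      intro K d hd s hs hcent hfac c hc
      have hρd : ρ d (qm (FreeSemigroup.of h * y))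
          = xg ⟨d * (h : G) * d⁻¹, mem_conj hO d h⟩ * ρ d (qm y) := by
        rw [qm_mul, map_mul, qm_of, rho_xg hO ρ hρ]
      have hfacy : ∀ c ∈ facs y, (c : G) ∈ K := fun c hc =>
        hfac c (by rw [facs_mul_of]; exact List.mem_cons_of_mem _ hc)
      have hhK : (h : G) ∈ K := hfac h (by rw [facs_mul_of]; exact List.mem_cons_self)
      have hs' : s = ρ d (qm y) ∨ ∃ u, s = u * ρ d (qm y) := by
        rcases hs with hs | ⟨u, hs⟩
        · exact Or.inr ⟨_, by rw [hs, hρd]⟩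
        · exact Or.inr ⟨_, by rw [hs, hρd, ← mul_assoc]⟩
      have htail : ∀ c ∈ facs y, ρ (d * (c : G) * d⁻¹) s = s :=
        ihy K d hd s hs' hcent hfacy
      rw [facs_mul_of] at hc
      rcases List.mem_cons.mp hc with rfl | hcy
      · -- head case
        have hb : ρ (d * α (qm y) * d⁻¹) s = s := fix_prod hO α hα ρ hρ y d s htail
        have hbinv : ρ (d * α (qm y) * d⁻¹)⁻¹ s = s := rho_inv ρ _ s hb
        have hbK : (d * α (qm y) * d⁻¹) ∈ K :=
          mul_mem (mul_mem hd (alpha_mem α hα K y hfacy)) (inv_mem hd)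
        set b : G := d * α (qm y) * d⁻¹ with hbdef
        have hkmem : b⁻¹ * (d * (c : G) * d⁻¹) * b⁻¹⁻¹ ∈ O :=
          mem_conj hO b⁻¹ ⟨d * (c : G) * d⁻¹, mem_conj hO d c⟩
        have hrot : ρ d (qm (FreeSemigroup.of c * y))
            = ρ d (qm y) * xg ⟨b⁻¹ * (d * (c : G) * d⁻¹) * b⁻¹⁻¹, hkmem⟩ := by
          rw [hρd, L2 hO α hα ρ hρ (ρ d (qm y)) (xg ⟨d * (c : G) * d⁻¹, mem_conj hO d c⟩)]
          rw [L0 hO α hα ρ hρ d (qm y)]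
          rw [rho_xg hO ρ hρ]
        have hs2 : ∃ u', s = u' * xg ⟨b⁻¹ * (d * (c : G) * d⁻¹) * b⁻¹⁻¹, hkmem⟩ := by
          rcases hs with hs | ⟨u, hs⟩
          · exact ⟨_, by rw [hs, hrot]⟩
          · exact ⟨_, by rw [hs, hrot, ← mul_assoc]⟩
        obtain ⟨u', hu'⟩ := hs2
        have hkK : b⁻¹ * (d * (c : G) * d⁻¹) * b⁻¹⁻¹ ∈ K :=
          mul_mem (mul_mem (inv_mem hbK)
            (mul_mem (mul_mem hd hhK) (inv_mem hd))) (inv_mem (inv_mem hbK))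
        have hcomm : Commute (α s) (b⁻¹ * (d * (c : G) * d⁻¹) * b⁻¹⁻¹) :=
          ((Subgroup.mem_centralizer_iff.mp hcent) _ hkK).symm
        have hfix : ρ (b⁻¹ * (d * (c : G) * d⁻¹) * b⁻¹⁻¹) s = s := by
          rw [hu']
          exact L4 hO α hα ρ hρ u' _ (by rw [← hu']; exact hcomm)
        have e : d * (c : G) * d⁻¹ = b * (b⁻¹ * (d * (c : G) * d⁻¹) * b⁻¹⁻¹) * b⁻¹ := by
          group
        rw [e, map_mul, map_mul, MulAut.mul_apply, MulAut.mul_apply, hbinv, hfix, hb]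
      · exact htail c hcy

end

theorem wordOf_eq (g : {g : G // g ∈ O}) (gs : List {g : G // g ∈ O}) :
    wordOf g gs = qm ⟨g, gs⟩ := by
  induction gs using List.reverseRecOn with
  | nil => rfl
  | append_singleton gs k ih =>
      have h1 : wordOf g (gs ++ [k]) = wordOf g gs * xg k := by
        simp [wordOf, List.foldl_append]
      have h2 : (⟨g, gs ++ [k]⟩ : FreeSemigroup {g : G // g ∈ O})
          = (⟨g, gs⟩ : FreeSemigroup _) * FreeSemigroup.of k := rfl
      rw [h1, ih, h2, qm_mul, qm_of]

end FactAux

open FactAux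

theorem stmt7 (G : Type) [Group G] (O : Set G) (h1 : (1 : G) ∉ O)
    (hO : ∀ g ∈ O, ∀ h : G, h⁻¹ * g * h ∈ O)
    (α : FactS G O →ₙ* G) (hα : ∀ g : {g : G // g ∈ O}, α (xg g) = (g : G))
    (ρ : G →* MulAut (FactS G O))
    (hρ : ∀ (h : G) (g : G) (hg : g ∈ O),
      ρ h (xg ⟨g, hg⟩) = xg ⟨h * g * h⁻¹, by simpa using hO g hg h⁻¹⟩)
    (Gs : FactS G O → Subgroup G)
    (hGs : ∀ (g : {g : G // g ∈ O}) (gs : List {g : G // g ∈ O}),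
      Gs (wordOf g gs) = Subgroup.closure {a : G | a ∈ (g :: gs).map Subtype.val}) :
    ∀ s : FactS G O, α s ∈ Gs s → α s ∈ Subgroup.centralizer ((Gs s : Subgroup G) : Set G) →
      ∀ g ∈ Gs s, ρ g s = s := by
  intro s
  induction s using Con.induction_on with
  | H w =>
    intro _ hcent g hg
    show ρ g (qm w) = qm w
    have hGseq : Gs (qm w) = Subgroup.closure {a : G | a ∈ (facs w).map Subtype.val} := by
      have h := hGs w.head w.tail
      rw [wordOf_eq] at h
      exact h
    have hfac : ∀ c ∈ facs w, (c : G) ∈ Gs (qm w) := by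
      intro c hc
      rw [hGseq]
      exact Subgroup.subset_closure (List.mem_map_of_mem hc)
    have hcent' : α (qm w) ∈ Subgroup.centralizer ((Gs (qm w) : Subgroup G) : Set G) := hcent
    have hgen : ∀ c ∈ facs w, ρ (c : G) (qm w) = qm w := by
      intro c hc
      have h := key hO α hα ρ hρ w (Gs (qm w)) 1 (one_mem _) (qm w)
        (Or.inl (by rw [map_one]; rfl)) hcent' hfac c hc
      simpa using h
    have hg' : g ∈ Subgroup.closure {a : G | a ∈ (facs w).map Subtype.val} := hGseq ▸ hg
    refine Subgroup.closure_induction ?_ ?_ ?_ ?_ hg'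
    · intro x hx
      obtain ⟨c, hc, rfl⟩ := List.mem_map.mp hx
      exact hgen c hc
    · rw [map_one]; rfl
    · intro x y hx hy px py
      rw [map_mul, MulAut.mul_apply, py, px]
    · intro x hx px
      exact rho_inv ρ x _ px
end

section
/- If s ∈ S(G,O) satisfies α(s) = 1 (the identity of G), then s commutes with every element of S(G,O); in particular, the subsemigroup S(G,O)_1 = α^{-1}(1) is contained in the center of S(G,O) and is commutative. -/
/-- Auxiliary: the quotient map into `S(G,O)`, typed as landing in `FactS`. -/
def fq {G : Type} [Group G] {O : Set G} (w : FreeSemigroup {g : G // g ∈ O}) :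
    FactS G O :=
  (conGen (FactRel G O)).toQuotient w

theorem stmt8 (G : Type) [Group G] (O : Set G) (h1 : (1 : G) ∉ O)
    (hO : ∀ g ∈ O, ∀ h : G, h⁻¹ * g * h ∈ O)
    (α : FactS G O →ₙ* G) (hα : ∀ g : {g : G // g ∈ O}, α (xg g) = (g : G)) :
    ∀ s : FactS G O, α s = 1 → ∀ t : FactS G O, s * t = t * s := by
  -- Key lemma: moving a generator right past any element conjugates it by α of that element.
  have key : ∀ s : FactS G O, ∀ g : {g : G // g ∈ O},
      xg g * s = s * xg ⟨(α s)⁻¹ * g * α s, hO g g.2 (α s)⟩ := by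
    intro s
    induction s using Con.induction_on with
    | H w =>
      induction w using FreeSemigroup.recOnMul with
      | ih1 a =>
        intro g
        have hrel : (conGen (FactRel G O))
            (FreeSemigroup.of g * FreeSemigroup.of a)
            (FreeSemigroup.of a * FreeSemigroup.of ⟨(a : G)⁻¹ * g * a, hO g g.2 a⟩) :=
          ConGen.Rel.of _ _ (FactRel.rel g a _)
        have h2 : xg g * xg a = xg a * xg ⟨(a : G)⁻¹ * g * a, hO g g.2 a⟩ :=
          (Con.eq _).2 hrel
        have h3 : xg (⟨(a : G)⁻¹ * g * a, hO g g.2 a⟩ : {g : G // g ∈ O}) =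
            xg ⟨(α (xg a))⁻¹ * g * α (xg a), hO g g.2 (α (xg a))⟩ := by
          congr 1
          exact Subtype.ext (by rw [hα a])
        show xg g * xg a = xg a * _
        rw [h2, h3]
        rfl
      | ih2 x y ihx ihy =>
        intro g
        have ihx' : ∀ g : {g : G // g ∈ O}, xg g * xg x =
            xg x * xg ⟨(α (xg x))⁻¹ * g * α (xg x), hO g g.2 (α (xg x))⟩ := ihx
        have ihy' : ∀ g : {g : G // g ∈ O}, xg g * fq y =
            fq y * xg ⟨(α (fq y))⁻¹ * g * α (fq y), hO g g.2 (α (fq y))⟩ := ihy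
        show xg g * (xg x * (fq y)) = _
        calc xg g * (xg x * (fq y))
            = (xg g * xg x) * fq y := (mul_assoc _ _ _).symm
          _ = (xg x * xg ⟨(α (xg x))⁻¹ * g * α (xg x), hO g g.2 (α (xg x))⟩) * fq y := by
              rw [ihx' g]
          _ = xg x * (xg ⟨(α (xg x))⁻¹ * g * α (xg x), hO g g.2 (α (xg x))⟩ * fq y) :=
              mul_assoc _ _ _
          _ = xg x * ((fq y) *
                xg ⟨(α (fq y))⁻¹ * ((α (xg x))⁻¹ * g * α (xg x)) * α (fq y),
                  hO _ (hO g g.2 (α (xg x))) (α (fq y))⟩) := by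
              rw [ihy' ⟨(α (xg x))⁻¹ * g * α (xg x), hO g g.2 (α (xg x))⟩]
          _ = (xg x * (fq y)) *
                xg ⟨(α (fq y))⁻¹ * ((α (xg x))⁻¹ * g * α (xg x)) * α (fq y),
                  hO _ (hO g g.2 (α (xg x))) (α (fq y))⟩ :=
              (mul_assoc _ _ _).symm
          _ = (xg x * (fq y)) *
                xg ⟨(α (xg x * (fq y)))⁻¹ * g * α (xg x * (fq y)),
                  hO g g.2 (α (xg x * (fq y)))⟩ := by
              congr 1
              congr 1
              exact Subtype.ext (by rw [map_mul]; group)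
  intro s hs t
  induction t using Con.induction_on with
  | H w =>
    induction w using FreeSemigroup.recOnMul with
    | ih1 a =>
      have := key s a
      rw [hs] at this
      have h3 : xg (⟨(1 : G)⁻¹ * a * 1, hO a a.2 1⟩ : {g : G // g ∈ O}) = xg a := by
        congr 1
        exact Subtype.ext (by group)
      show s * xg a = xg a * s
      rw [this, h3]
    | ih2 x y ihx ihy =>
      have ihx' : s * xg x = xg x * s := ihx
      have ihy' : s * fq y = fq y * s := ihy
      show s * (xg x * (fq y)) = (xg x * (fq y)) * s
      rw [← mul_assoc, ihx', mul_assoc, ihy', ← mul_assoc]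
end

section
/- If g ∈ O has order n in G, then the element x_g^n of S(G,O) lies in S(G,O)_1, i.e., α(x_g^n) = 1, and hence x_g^n is central in S(G,O). -/
/-- `spow s n = s^(n+1)` : the `(n+1)`-fold product of `s` with itself. -/
def spow {S : Type} [Mul S] (s : S) : ℕ → S
  | 0 => s
  | n + 1 => spow s n * s

lemma key {G : Type} [Group G] {O : Set G}
    (hO : ∀ g ∈ O, ∀ h : G, h⁻¹ * g * h ∈ O)
    (α : FactS G O →ₙ* G) (hα : ∀ g : {g : G // g ∈ O}, α (xg g) = (g : G)) :
    ∀ s : FactS G O, ∀ g : {g : G // g ∈ O},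
      xg g * s = s * xg ⟨(α s)⁻¹ * g * α s, hO g g.2 (α s)⟩ := by
  intro s
  induction s using Con.induction_on with
  | H w =>
    induction w using FreeSemigroup.recOnMul with
    | ih1 a =>
      intro g
      have h' : ((a : G))⁻¹ * g * a ∈ O := hO g g.2 a
      have hrel : (xg g * xg a : FactS G O) = xg a * xg ⟨(a : G)⁻¹ * g * a, h'⟩ :=
        (Con.eq _).mpr (ConGen.Rel.of _ _ (FactRel.rel g a h'))
      have ha : α (xg a) = (a : G) := hα a
      have ha' : α ((conGen (FactRel G O)).toQuotient (FreeSemigroup.of a)) = (a : G) := hα a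
      convert hrel using 3
      · rfl
      · simp [ha']; rfl
    | ih2 a w iha ihw =>
      intro g
      set q : FreeSemigroup {g : G // g ∈ O} → FactS G O := (conGen (FactRel G O)).toQuotient with hq
      set v : FreeSemigroup {g : G // g ∈ O} := FreeSemigroup.of a with hv
      have hc : q (v * w) = q v * q w := rfl
      have hmul : α (q (v * w))
          = α (q v) * α (q w) := by rw [hc]; exact map_mul α _ _
      calc xg g * q (v * w)
          = (xg g * q v) * q w := by rw [hc, mul_assoc]
        _ = q v * (xg ⟨(α (q v))⁻¹ * g * α (q v), hO g g.2 _⟩ * q w) := by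
            rw [iha g, mul_assoc]
        _ = q v * (q w * xg ⟨(α (q w))⁻¹ * ((α (q v))⁻¹ * g * α (q v)) * α (q w), hO _ (hO g g.2 _) _⟩) := by
            rw [ihw]
        _ = q (v * w) * xg ⟨(α (q (v * w)))⁻¹ * g * α (q (v * w)), hO g g.2 _⟩ := by
            rw [← mul_assoc]
            congr 1
            exact congrArg xg (Subtype.ext (by simp [hmul, mul_assoc]))

lemma central {G : Type} [Group G] {O : Set G}
    (hO : ∀ g ∈ O, ∀ h : G, h⁻¹ * g * h ∈ O)
    (α : FactS G O →ₙ* G) (hα : ∀ g : {g : G // g ∈ O}, α (xg g) = (g : G))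
    (s : FactS G O) (hs : α s = 1) : ∀ t : FactS G O, s * t = t * s := by
  have hx : ∀ g : {g : G // g ∈ O}, s * xg g = xg g * s := by
    intro g
    have h := key hO α hα s g
    rw [h]
    congr 1
    exact congrArg xg (Subtype.ext (by simp [hs]))
  intro t
  induction t using Con.induction_on with
  | H w =>
    induction w using FreeSemigroup.recOnMul with
    | ih1 a =>
      show s * xg a = xg a * s
      exact hx a
    | ih2 a w iha ihw =>
      set q : FreeSemigroup {g : G // g ∈ O} → FactS G O := (conGen (FactRel G O)).toQuotient with hq
      have hc : q (FreeSemigroup.of a * w) = q (FreeSemigroup.of a) * q w := rfl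
      rw [hc, ← mul_assoc, iha, mul_assoc, ihw, ← mul_assoc]

lemma alpha_spow {G : Type} [Group G] {O : Set G}
    (α : FactS G O →ₙ* G) (hα : ∀ g : {g : G // g ∈ O}, α (xg g) = (g : G))
    (g : {g : G // g ∈ O}) (n : ℕ) : α (spow (xg g) n) = (g : G) ^ (n + 1) := by
  induction n with
  | zero => simpa [spow] using hα g
  | succ n ih => simp [spow, map_mul, ih, hα, pow_succ, mul_assoc]

theorem stmt9 (G : Type) [Group G] (O : Set G) (h1 : (1 : G) ∉ O)
    (hO : ∀ g ∈ O, ∀ h : G, h⁻¹ * g * h ∈ O)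
    (α : FactS G O →ₙ* G) (hα : ∀ g : {g : G // g ∈ O}, α (xg g) = (g : G)) :
    ∀ (g : G) (hg : g ∈ O) (n : ℕ), orderOf g = n + 1 →
      α (spow (xg ⟨g, hg⟩) n) = 1 ∧
      ∀ t : FactS G O, spow (xg ⟨g, hg⟩) n * t = t * spow (xg ⟨g, hg⟩) n := by
  intro g hg n hn
  have h1' : α (spow (xg ⟨g, hg⟩) n) = 1 := by
    rw [alpha_spow α hα ⟨g, hg⟩ n]
    show g ^ (n + 1) = 1
    rw [← hn]
    exact pow_orderOf_eq_one g
  exact ⟨h1', central hO α hα _ h1'⟩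
end

section
/- Let s ∈ S(G,O) with α(s) in the center of G_O, and let s1 ∈ S(G,O) with G_{s1} = G_O. Then s·s1 = ρ(g)(s)·s1 for every g ∈ G_O. -/
section Aux

variable {G : Type} [Group G] {O : Set G}

/-- The quotient map. -/
private def fmk (w : FreeSemigroup {g : G // g ∈ O}) : FactS G O :=
  (conGen (FactRel G O)).toQuotient w

private lemma fmk_mul (a b : FreeSemigroup {g : G // g ∈ O}) :
    fmk (a * b) = fmk a * fmk b := rfl

private lemma fmk_of (g : {g : G // g ∈ O}) : fmk (FreeSemigroup.of g) = xg g := rfl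

private lemma factS_ind {p : FactS G O → Prop} (hg : ∀ g, p (xg g))
    (hmul : ∀ a b, p a → p b → p (a * b)) (x : FactS G O) : p x := by
  induction x using Con.induction_on with
  | H w =>
    induction w using FreeSemigroup.recOnMul with
    | ih1 g => exact hg g
    | ih2 a b ha hb => exact hmul (fmk (FreeSemigroup.of a)) (fmk b) ha hb

private lemma conj_mem (hO : ∀ g ∈ O, ∀ h : G, h⁻¹ * g * h ∈ O)
    (h k : {g : G // g ∈ O}) : (h : G) * k * (h : G)⁻¹ ∈ O := by
  simpa using hO k k.2 (h : G)⁻¹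

/-- The defining relation, rewritten: `x_h ⬝ x_k = x_{h k h⁻¹} ⬝ x_h`. -/
private lemma xg_mul_xg (hO : ∀ g ∈ O, ∀ h : G, h⁻¹ * g * h ∈ O)
    (h k : {g : G // g ∈ O}) :
    xg h * xg k = xg ⟨(h : G) * k * (h : G)⁻¹, conj_mem hO h k⟩ * xg h := by
  have hmem : (h : G)⁻¹ * ((h : G) * k * (h : G)⁻¹) * h ∈ O := by
    have : (h : G)⁻¹ * ((h : G) * k * (h : G)⁻¹) * h = (k : G) := by group
    rw [this]; exact k.2
  have hrel := FactRel.rel (G := G) (O := O) ⟨(h : G) * k * (h : G)⁻¹, conj_mem hO h k⟩ h hmem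
  have hsub : (⟨(h : G)⁻¹ * ((h : G) * k * (h : G)⁻¹) * h, hmem⟩ : {g : G // g ∈ O}) = k := by
    apply Subtype.ext; group
  rw [hsub] at hrel
  exact ((Con.eq _).2 (ConGen.Rel.of _ _ hrel)).symm

private lemma xg_mul (hO : ∀ g ∈ O, ∀ h : G, h⁻¹ * g * h ∈ O)
    (ρ : G →* MulAut (FactS G O))
    (hρ : ∀ (h : G) (g : G) (hg : g ∈ O),
      ρ h (xg ⟨g, hg⟩) = xg ⟨h * g * h⁻¹, by simpa using hO g hg h⁻¹⟩)
    (h : {g : G // g ∈ O}) (u : FactS G O) :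
    xg h * u = ρ (h : G) u * xg h := by
  induction u using factS_ind with
  | hg k =>
    have hk := hρ (h : G) (k : G) k.2
    rw [Subtype.coe_eta] at hk
    rw [hk, xg_mul_xg hO h k]
  | hmul a b ha hb =>
    rw [← mul_assoc, ha, mul_assoc, hb, ← mul_assoc, ← map_mul]

/-- Key exchange lemma : `t * u = ρ(α t) u * t`. -/
private lemma mul_exch (hO : ∀ g ∈ O, ∀ h : G, h⁻¹ * g * h ∈ O)
    (α : FactS G O →ₙ* G) (hα : ∀ g : {g : G // g ∈ O}, α (xg g) = (g : G))
    (ρ : G →* MulAut (FactS G O))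
    (hρ : ∀ (h : G) (g : G) (hg : g ∈ O),
      ρ h (xg ⟨g, hg⟩) = xg ⟨h * g * h⁻¹, by simpa using hO g hg h⁻¹⟩)
    (t u : FactS G O) : t * u = ρ (α t) u * t := by
  induction t using factS_ind generalizing u with
  | hg h => rw [hα h]; exact xg_mul hO ρ hρ h u
  | hmul a b ha hb =>
    rw [mul_assoc, hb, ← mul_assoc, ha, ← mul_assoc, map_mul, map_mul, MulAut.mul_apply]

private lemma rho_fix (hO : ∀ g ∈ O, ∀ h : G, h⁻¹ * g * h ∈ O)
    (ρ : G →* MulAut (FactS G O))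
    (hρ : ∀ (h : G) (g : G) (hg : g ∈ O),
      ρ h (xg ⟨g, hg⟩) = xg ⟨h * g * h⁻¹, by simpa using hO g hg h⁻¹⟩)
    {c : G}
    (hc : c ∈ Subgroup.centralizer ((Subgroup.closure O : Subgroup G) : Set G))
    (x : FactS G O) : ρ c x = x := by
  induction x using factS_ind with
  | hg k =>
    have hk := hρ c (k : G) k.2
    rw [Subtype.coe_eta] at hk
    rw [hk]
    congr 1
    apply Subtype.ext
    have hcomm := Subgroup.mem_centralizer_iff.1 hc (k : G) (Subgroup.subset_closure k.2)
    show c * (k : G) * c⁻¹ = (k : G)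
    rw [← hcomm]; group
  | hmul a b ha hb => rw [map_mul, ha, hb]

/-- Elements with central image are central in `S(G,O)`. -/
private lemma central_comm (hO : ∀ g ∈ O, ∀ h : G, h⁻¹ * g * h ∈ O)
    (α : FactS G O →ₙ* G) (hα : ∀ g : {g : G // g ∈ O}, α (xg g) = (g : G))
    (ρ : G →* MulAut (FactS G O))
    (hρ : ∀ (h : G) (g : G) (hg : g ∈ O),
      ρ h (xg ⟨g, hg⟩) = xg ⟨h * g * h⁻¹, by simpa using hO g hg h⁻¹⟩)
    {u : FactS G O}
    (hu : α u ∈ Subgroup.centralizer ((Subgroup.closure O : Subgroup G) : Set G))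
    (t : FactS G O) : u * t = t * u := by
  rw [mul_exch hO α hα ρ hρ u t, rho_fix hO ρ hρ hu]

private lemma alpha_rho (hO : ∀ g ∈ O, ∀ h : G, h⁻¹ * g * h ∈ O)
    (α : FactS G O →ₙ* G) (hα : ∀ g : {g : G // g ∈ O}, α (xg g) = (g : G))
    (ρ : G →* MulAut (FactS G O))
    (hρ : ∀ (h : G) (g : G) (hg : g ∈ O),
      ρ h (xg ⟨g, hg⟩) = xg ⟨h * g * h⁻¹, by simpa using hO g hg h⁻¹⟩)
    (g : G) (x : FactS G O) : α (ρ g x) = g * α x * g⁻¹ := by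
  induction x using factS_ind with
  | hg k =>
    have hk := hρ g (k : G) k.2
    rw [Subtype.coe_eta] at hk
    rw [hk, hα, hα]
  | hmul a b ha hb => rw [map_mul, map_mul, ha, hb, map_mul]; group

private lemma alpha_rho_mem (hO : ∀ g ∈ O, ∀ h : G, h⁻¹ * g * h ∈ O)
    (α : FactS G O →ₙ* G) (hα : ∀ g : {g : G // g ∈ O}, α (xg g) = (g : G))
    (ρ : G →* MulAut (FactS G O))
    (hρ : ∀ (h : G) (g : G) (hg : g ∈ O),
      ρ h (xg ⟨g, hg⟩) = xg ⟨h * g * h⁻¹, by simpa using hO g hg h⁻¹⟩)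
    {g : G} (hg : g ∈ Subgroup.closure O) {u : FactS G O}
    (hu : α u ∈ Subgroup.centralizer ((Subgroup.closure O : Subgroup G) : Set G)) :
    α (ρ g u) ∈ Subgroup.centralizer ((Subgroup.closure O : Subgroup G) : Set G) := by
  rw [alpha_rho hO α hα ρ hρ]
  have hcomm := Subgroup.mem_centralizer_iff.1 hu g hg
  have : g * α u * g⁻¹ = α u := by rw [hcomm]; group
  rw [this]; exact hu

/-- The letter lemma: if `h` is a letter of the word `w` and `α u` is central, then
`ρ h u * w = u * w`. -/
private lemma letter_lemma (hO : ∀ g ∈ O, ∀ h : G, h⁻¹ * g * h ∈ O)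
    (α : FactS G O →ₙ* G) (hα : ∀ g : {g : G // g ∈ O}, α (xg g) = (g : G))
    (ρ : G →* MulAut (FactS G O))
    (hρ : ∀ (h : G) (g : G) (hg : g ∈ O),
      ρ h (xg ⟨g, hg⟩) = xg ⟨h * g * h⁻¹, by simpa using hO g hg h⁻¹⟩)
    (w : FreeSemigroup {g : G // g ∈ O}) {u : FactS G O}
    (hu : α u ∈ Subgroup.centralizer ((Subgroup.closure O : Subgroup G) : Set G))
    (h : {g : G // g ∈ O}) (hh : h ∈ w.head :: w.tail) :
    ρ (h : G) u * fmk w = u * fmk w := by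
  induction w using FreeSemigroup.recOnMul generalizing u with
  | ih1 k =>
    have : h = k := by simpa [FreeSemigroup.of] using hh
    subst this
    rw [fmk_of, ← xg_mul hO ρ hρ, central_comm hO α hα ρ hρ hu]
  | ih2 a b ha hb =>
    have hmem : h = a ∨ h ∈ b.head :: b.tail := by
      rcases List.mem_cons.1 hh with hc | hc
      · left
        simpa [FreeSemigroup.head_mul, FreeSemigroup.of] using hc
      · right
        rw [FreeSemigroup.tail_mul] at hc
        simpa [FreeSemigroup.of] using hc
    have huh : α (ρ (h : G) u) ∈
        Subgroup.centralizer ((Subgroup.closure O : Subgroup G) : Set G) :=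
      alpha_rho_mem hO α hα ρ hρ (Subgroup.subset_closure h.2) hu
    rw [fmk_mul, fmk_of]
    rcases hmem with rfl | hm
    · rw [← mul_assoc, ← xg_mul hO ρ hρ, ← central_comm hO α hα ρ hρ hu (xg h), mul_assoc]
    · rw [← mul_assoc, central_comm hO α hα ρ hρ huh (xg a), mul_assoc, hb hu hm,
        ← mul_assoc, ← central_comm hO α hα ρ hρ hu (xg a), mul_assoc]

private lemma foldl_fmk (gs : List {g : G // g ∈ O}) (w : FreeSemigroup {g : G // g ∈ O}) :
    gs.foldl (fun s h => s * xg h) (fmk w) =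
      fmk (gs.foldl (fun s h => s * FreeSemigroup.of h) w) := by
  induction gs generalizing w with
  | nil => rfl
  | cons a gs ih => simpa [fmk_mul, fmk_of] using ih (w * FreeSemigroup.of a)

private lemma foldl_free (gs : List {g : G // g ∈ O}) (w : FreeSemigroup {g : G // g ∈ O}) :
    gs.foldl (fun s h => s * FreeSemigroup.of h) w = ⟨w.head, w.tail ++ gs⟩ := by
  induction gs generalizing w with
  | nil => simp
  | cons a gs ih =>
    simp only [List.foldl_cons, ih]
    simp [FreeSemigroup.head_mul, FreeSemigroup.tail_mul, FreeSemigroup.of]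

private lemma fmk_eq_wordOf (w : FreeSemigroup {g : G // g ∈ O}) :
    fmk w = wordOf w.head w.tail := by
  rw [wordOf, ← fmk_of, foldl_fmk, foldl_free]
  rfl

end Aux

theorem stmt10 (G : Type) [Group G] (O : Set G) (h1 : (1 : G) ∉ O)
    (hO : ∀ g ∈ O, ∀ h : G, h⁻¹ * g * h ∈ O)
    (α : FactS G O →ₙ* G) (hα : ∀ g : {g : G // g ∈ O}, α (xg g) = (g : G))
    (ρ : G →* MulAut (FactS G O))
    (hρ : ∀ (h : G) (g : G) (hg : g ∈ O),
      ρ h (xg ⟨g, hg⟩) = xg ⟨h * g * h⁻¹, by simpa using hO g hg h⁻¹⟩)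
    (Gs : FactS G O → Subgroup G)
    (hGs : ∀ (g : {g : G // g ∈ O}) (gs : List {g : G // g ∈ O}),
      Gs (wordOf g gs) = Subgroup.closure {a : G | a ∈ (g :: gs).map Subtype.val}) :
    ∀ s s₁ : FactS G O,
      α s ∈ Subgroup.closure O →
      α s ∈ Subgroup.centralizer ((Subgroup.closure O : Subgroup G) : Set G) →
      Gs s₁ = Subgroup.closure O →
      ∀ g ∈ Subgroup.closure O, s * s₁ = ρ g s * s₁ := by
  intro s s₁ _ hcent hGs1 g hg
  -- represent s₁ as a word
  obtain ⟨w, rfl⟩ : ∃ w : FreeSemigroup {g : G // g ∈ O}, s₁ = fmk w := by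
    induction s₁ using Con.induction_on with
    | H w => exact ⟨w, rfl⟩
  have hword : fmk w = wordOf w.head w.tail := fmk_eq_wordOf w
  have hclos : Subgroup.closure O =
      Subgroup.closure {a : G | a ∈ (w.head :: w.tail).map Subtype.val} := by
    rw [← hGs w.head w.tail, ← hword, hGs1]
  rw [hclos] at hg
  symm
  -- induction over the closure of the letters of `w`
  refine Subgroup.closure_induction
    (p := fun x _ => ∀ u : FactS G O,
      α u ∈ Subgroup.centralizer ((Subgroup.closure O : Subgroup G) : Set G) →
      ρ x u * fmk w = u * fmk w)
    ?_ ?_ ?_ ?_ hg s hcent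
  · -- letters
    intro x hx u hu
    obtain ⟨h, hh, rfl⟩ := List.mem_map.1 hx
    exact letter_lemma hO α hα ρ hρ w hu h hh
  · intro u _
    simp
  · intro x y hx hy px py u hu
    have hyO : y ∈ Subgroup.closure O := hclos ▸ hy
    have huy := alpha_rho_mem hO α hα ρ hρ hyO hu
    rw [map_mul, MulAut.mul_apply, px (ρ y u) huy, py u hu]
  · intro x hx px u hu
    have hxO : x ∈ Subgroup.closure O := hclos ▸ hx
    have hux := alpha_rho_mem hO α hα ρ hρ (inv_mem hxO) hu
    have h2 := px (ρ x⁻¹ u) hux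
    rw [show ρ x (ρ x⁻¹ u) = u by
      rw [← MulAut.mul_apply, ← map_mul, mul_inv_cancel, map_one, MulAut.one_apply]] at h2
    exact h2.symm
end

section
/- Suppose s ∈ S(G,O) with G_s = G, C ⊆ O is a conjugacy class of G, and g1 ∈ C satisfies g1^n ∈ Z(G). Then for every g2 ∈ C one has x_{g1}^n · s = x_{g2}^n · s in S(G,O). -/
namespace MyAux

variable {G : Type} [Group G] {O : Set G}

/-- conjugation on the generator index set -/
def cj (hO : ∀ g ∈ O, ∀ h : G, h⁻¹ * g * h ∈ O) (w : G) (a : {g : G // g ∈ O}) :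
    {g : G // g ∈ O} := ⟨w⁻¹ * a * w, hO a a.2 w⟩

variable (hO : ∀ g ∈ O, ∀ h : G, h⁻¹ * g * h ∈ O)

lemma cj_cj (w w' : G) (a : {g : G // g ∈ O}) :
    cj hO w (cj hO w' a) = cj hO (w' * w) a := by
  apply Subtype.ext; simp [cj, mul_assoc]

lemma cj_one (a : {g : G // g ∈ O}) : cj hO 1 a = a := Subtype.ext (by simp [cj])

lemma rel1 (a b : {g : G // g ∈ O}) : xg a * xg b = xg b * xg (cj hO (b : G) a) :=
  Quotient.sound (ConGen.Rel.of _ _ (FactRel.rel a b (hO a a.2 b)))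


/-- move a generator leftwards through a power: x_a^{m+1} x_b = x_b (x_{a^b})^{m+1} -/
lemma spow_mul_xg (m : ℕ) (a b : {g : G // g ∈ O}) :
    spow (xg a) m * xg b = xg b * spow (xg (cj hO (b : G) a)) m := by
  induction m with
  | zero => exact rel1 hO a b
  | succ m ih =>
      show spow (xg a) m * xg a * xg b = xg b * (spow (xg (cj hO (b:G) a)) m * xg (cj hO (b:G) a))
      rw [mul_assoc, rel1 hO a b, ← mul_assoc, ih, mul_assoc]

/-- move a generator rightwards through a power: x_b x_a^{m+1} = x_a^{m+1} x_{b^{a^{m+1}}} -/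
lemma xg_mul_spow (m : ℕ) (a b : {g : G // g ∈ O}) :
    xg b * spow (xg a) m = spow (xg a) m * xg (cj hO ((a : G) ^ (m + 1)) b) := by
  induction m with
  | zero => rw [show ((a:G)^(0+1)) = (a:G) by group]; exact rel1 hO b a
  | succ m ih =>
      show xg b * (spow (xg a) m * xg a) = spow (xg a) m * xg a * xg (cj hO ((a:G)^(m+1+1)) b)
      rw [← mul_assoc, ih, mul_assoc, rel1 hO (cj hO ((a:G)^(m+1)) b) a, cj_cj,
        show ((a:G)^(m+1) * a) = (a:G)^(m+1+1) by group, mul_assoc]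


lemma cj_central {w : G} (hw : w ∈ Subgroup.center G) (b : {g : G // g ∈ O}) :
    cj hO w b = b := by
  apply Subtype.ext
  show w⁻¹ * (b : G) * w = b
  rw [mul_assoc, Subgroup.mem_center_iff.mp hw (b : G)]
  group

lemma cent_gen {n : ℕ} (hO : ∀ g ∈ O, ∀ h : G, h⁻¹ * g * h ∈ O) {a : {g : G // g ∈ O}} (ha : (a : G) ^ (n + 1) ∈ Subgroup.center G)
    (b : {g : G // g ∈ O}) : xg b * spow (xg a) n = spow (xg a) n * xg b := by
  rw [xg_mul_spow hO, cj_central hO ha]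

lemma cent {n : ℕ} (hO : ∀ g ∈ O, ∀ h : G, h⁻¹ * g * h ∈ O) {a : {g : G // g ∈ O}} (ha : (a : G) ^ (n + 1) ∈ Subgroup.center G)
    (t : FactS G O) : spow (xg a) n * t = t * spow (xg a) n := by
  induction t using Con.induction_on with
  | H x =>
    induction x using FreeSemigroup.recOnMul with
    | ih1 g => exact (cent_gen hO ha g).symm
    | ih2 u v ihu ihv =>
        have key : ∀ x y : FactS G O, spow (xg a) n * x = x * spow (xg a) n →
            spow (xg a) n * y = y * spow (xg a) n → spow (xg a) n * (x * y) = x * y * spow (xg a) n := by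
          intro x y hx hy
          rw [← mul_assoc, hx, mul_assoc, hy, ← mul_assoc]
        rw [Con.coe_mul]
        exact key _ _ ihu ihv


/-- product of the factors of a word -/
def pr (g : {g : G // g ∈ O}) (gs : List {g : G // g ∈ O}) : G :=
  ((g :: gs).map Subtype.val).prod

lemma pr_nil (g : {g : G // g ∈ O}) : pr g [] = (g : G) := by simp [pr]

lemma pr_concat (g b : {g : G // g ∈ O}) (gs : List {g : G // g ∈ O}) :
    pr g (gs ++ [b]) = pr g gs * (b : G) := by simp [pr, mul_assoc]

lemma wordOf_concat (g b : {g : G // g ∈ O}) (gs : List {g : G // g ∈ O}) :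
    wordOf g (gs ++ [b]) = wordOf g gs * xg b := by
  simp [wordOf, List.foldl_append]

lemma wordOf_mul (g g' : {g : G // g ∈ O}) (gs gs' : List {g : G // g ∈ O}) :
    wordOf g gs * wordOf g' gs' = wordOf g (gs ++ g' :: gs') := by
  induction gs' using List.reverseRecOn with
  | nil => exact (wordOf_concat g g' gs).symm
  | append_singleton gs' b ih =>
      rw [wordOf_concat, ← mul_assoc, ih, ← wordOf_concat]
      simp

lemma exists_word (s : FactS G O) : ∃ g gs, s = wordOf g gs := by
  induction s using Con.induction_on with
  | H x =>
    induction x using FreeSemigroup.recOnMul with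
    | ih1 g => exact ⟨g, [], rfl⟩
    | ih2 u v ihu ihv =>
        obtain ⟨g, gs, hu⟩ := ihu
        obtain ⟨g', gs', hv⟩ := ihv
        exact ⟨g, gs ++ g' :: gs', by rw [Con.coe_mul, hu, hv]; exact wordOf_mul g g' gs gs'⟩

lemma spow_mul_wordOf (n : ℕ) (a g : {g : G // g ∈ O}) (gs : List {g : G // g ∈ O}) :
    spow (xg a) n * wordOf g gs = wordOf g gs * spow (xg (cj hO (pr g gs) a)) n := by
  induction gs using List.reverseRecOn with
  | nil =>
      have := spow_mul_xg hO n a g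
      rw [show wordOf g [] = xg g from rfl, this, pr_nil]
  | append_singleton gs b ih =>
      rw [wordOf_concat, ← mul_assoc, ih, mul_assoc, spow_mul_xg hO n, cj_cj,
        ← pr_concat, ← mul_assoc]

end MyAux

theorem stmt11 (G : Type) [Group G] (O : Set G) (h1 : (1 : G) ∉ O)
    (hO : ∀ g ∈ O, ∀ h : G, h⁻¹ * g * h ∈ O)
    (Gs : FactS G O → Subgroup G)
    (hGs : ∀ (g : {g : G // g ∈ O}) (gs : List {g : G // g ∈ O}),
      Gs (wordOf g gs) = Subgroup.closure {a : G | a ∈ (g :: gs).map Subtype.val}) :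
    ∀ (s : FactS G O), Gs s = ⊤ →
      ∀ (C : Set G) (hCO : C ⊆ O) (g₁ : G) (hg₁ : g₁ ∈ C),
        C = {x : G | IsConj g₁ x} →
        ∀ n : ℕ, g₁ ^ (n + 1) ∈ Subgroup.center G →
          ∀ (g₂ : G) (hg₂ : g₂ ∈ C),
            spow (xg ⟨g₁, hCO hg₁⟩) n * s = spow (xg ⟨g₂, hCO hg₂⟩) n * s := by
  intro s hs C hCO g₁ hg₁ hC n hn g₂ hg₂
  -- conjugation-invariance of C
  have memC : ∀ h ∈ C, ∀ w : G, w⁻¹ * h * w ∈ C := by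
    intro h hh w
    rw [hC] at hh ⊢
    exact hh.trans (isConj_iff.mpr ⟨w⁻¹, by group⟩)
  -- (n+1)-st powers of elements of C are central
  have hcen : ∀ h ∈ C, h ^ (n + 1) ∈ Subgroup.center G := by
    intro h hh
    rw [hC] at hh
    obtain ⟨z, hz⟩ := isConj_iff.mp hh
    have h2 : h ^ (n + 1) = g₁ ^ (n + 1) := by
      rw [← hz, conj_pow, Subgroup.mem_center_iff.mp hn z]
      group
    rw [h2]; exact hn
  obtain ⟨g, gs, rfl⟩ := MyAux.exists_word s
  set s := wordOf g gs with hsdef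
  -- the subgroup property
  let Kp : G → Prop := fun w => ∀ (h : G) (hh : h ∈ C),
      spow (xg ⟨h, hCO hh⟩) n * s
        = spow (xg (MyAux.cj hO w ⟨h, hCO hh⟩)) n * s
  -- prefix products satisfy Kp
  have hKprefix : ∀ (l1 l2 : List {g : G // g ∈ O}), gs = l1 ++ l2 →
      Kp (MyAux.pr g l1) := by
    intro l1 l2 hsplit h hh
    have hcent1 : ((⟨h, hCO hh⟩ : {g : G // g ∈ O}) : G) ^ (n + 1) ∈ Subgroup.center G :=
      hcen h hh
    have hcent2 : ((MyAux.cj hO (MyAux.pr g l1) ⟨h, hCO hh⟩ : {g : G // g ∈ O}) : G) ^ (n + 1)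
        ∈ Subgroup.center G := hcen _ (memC h hh _)
    cases l2 with
    | nil =>
        rw [List.append_nil] at hsplit
        subst hsplit
        rw [hsdef, MyAux.spow_mul_wordOf hO n ⟨h, hCO hh⟩ g gs,
          MyAux.cent hO hcent2 (wordOf g gs)]
    | cons b l2' =>
        subst hsplit
        rw [hsdef, ← MyAux.wordOf_mul g b l1 l2', ← mul_assoc,
          MyAux.spow_mul_wordOf hO n ⟨h, hCO hh⟩ g l1, mul_assoc,
          MyAux.cent hO hcent2 (wordOf b l2'), ← mul_assoc,
          MyAux.cent hO hcent2 (wordOf g l1 * wordOf b l2')]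
  -- Kp defines a subgroup
  have Kone : Kp 1 := by
    intro h hh
    rw [MyAux.cj_one]
  have Kmul : ∀ {w1 w2 : G}, Kp w1 → Kp w2 → Kp (w1 * w2) := by
    intro w1 w2 h1 h2 h hh
    rw [← MyAux.cj_cj hO w2 w1 ⟨h, hCO hh⟩]
    have e1 := h1 h hh
    have e2 := h2 (w1⁻¹ * h * w1) (memC h hh w1)
    exact e1.trans e2
  have Kinv : ∀ {w : G}, Kp w → Kp w⁻¹ := by
    intro w hw h hh
    have e := hw (w⁻¹⁻¹ * h * w⁻¹) (memC h hh w⁻¹)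
    have e' : (⟨w⁻¹⁻¹ * h * w⁻¹, hCO (memC h hh w⁻¹)⟩ : {g : G // g ∈ O})
        = MyAux.cj hO w⁻¹ ⟨h, hCO hh⟩ := rfl
    rw [e'] at e
    rw [MyAux.cj_cj hO w w⁻¹ ⟨h, hCO hh⟩, inv_mul_cancel, MyAux.cj_one] at e
    exact e.symm
  let K : Subgroup G :=
    { carrier := setOf Kp
      one_mem' := Kone
      mul_mem' := fun ha hb => Kmul ha hb
      inv_mem' := fun ha => Kinv ha }
  -- all factors lie in K
  have hsub : {a : G | a ∈ (g :: gs).map Subtype.val} ⊆ (K : Set G) := by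
    intro a ha
    simp only [Set.mem_setOf_eq, List.mem_map] at ha
    obtain ⟨b, hb, rfl⟩ := ha
    rcases List.mem_cons.mp hb with hb | hb
    · have hp := hKprefix [] gs rfl
      rw [MyAux.pr_nil] at hp
      rw [hb]
      exact hp
    · obtain ⟨l1, l2, hsplit⟩ := List.append_of_mem hb
      have h1 : MyAux.pr g l1 ∈ K := hKprefix l1 (b :: l2) hsplit
      have h2 : MyAux.pr g (l1 ++ [b]) ∈ K := hKprefix (l1 ++ [b]) l2 (by rw [hsplit]; simp)
      have hval : (b : G) = (MyAux.pr g l1)⁻¹ * MyAux.pr g (l1 ++ [b]) := by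
        rw [MyAux.pr_concat]; group
      show (b : G) ∈ K
      rw [hval]
      exact mul_mem (inv_mem h1) h2
  -- K = ⊤
  have htop : ∀ w : G, Kp w := by
    intro w
    have hcl : Subgroup.closure {a : G | a ∈ (g :: gs).map Subtype.val} = ⊤ := by
      rw [← hGs g gs]; exact hs
    have hle : (⊤ : Subgroup G) ≤ K := by
      rw [← hcl]; exact (Subgroup.closure_le K).mpr hsub
    exact hle (Subgroup.mem_top w)
  -- conclusion
  have hconj : IsConj g₁ g₂ := by rw [hC] at hg₂; exact hg₂
  obtain ⟨z, hz⟩ := isConj_iff.mp hconj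
  have e := htop z⁻¹ g₁ hg₁
  have hsub2 : MyAux.cj hO z⁻¹ ⟨g₁, hCO hg₁⟩ = ⟨g₂, hCO hg₂⟩ := by
    apply Subtype.ext
    show z⁻¹⁻¹ * g₁ * z⁻¹ = g₂
    rw [← hz]; group
  rw [← hsub2]
  exact e
end

section
/- Every element s of S(G,O) with α(s) = 1 and G_s = G is fixed by the simultaneous conjugation action of G, i.e., ρ(g)(s) = s for all g ∈ G. -/
theorem stmt12 (G : Type) [Group G] (O : Set G) (h1 : (1 : G) ∉ O)
    (hO : ∀ g ∈ O, ∀ h : G, h⁻¹ * g * h ∈ O)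
    (α : FactS G O →ₙ* G) (hα : ∀ g : {g : G // g ∈ O}, α (xg g) = (g : G))
    (ρ : G →* MulAut (FactS G O))
    (hρ : ∀ (h : G) (g : G) (hg : g ∈ O),
      ρ h (xg ⟨g, hg⟩) = xg ⟨h * g * h⁻¹, by simpa using hO g hg h⁻¹⟩)
    (Gs : FactS G O → Subgroup G)
    (hGs : ∀ (g : {g : G // g ∈ O}) (gs : List {g : G // g ∈ O}),
      Gs (wordOf g gs) = Subgroup.closure {a : G | a ∈ (g :: gs).map Subtype.val}) :
    ∀ s : FactS G O, α s = 1 → Gs s = ⊤ → ∀ g : G, ρ g s = s := by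
  set X := {g : G // g ∈ O} with hX
  -- multiplication commutes with the quotient map (definitional)
  have hcoe : ∀ x y : FreeSemigroup X,
      ((conGen (FactRel G O)).toQuotient (x * y) : FactS G O) =
        (conGen (FactRel G O)).toQuotient x * (conGen (FactRel G O)).toQuotient y :=
    fun _ _ => rfl
  -- foldl lemma
  have hfoldl : ∀ (m : List X) (s t : FactS G O),
      s * m.foldl (fun a b => a * xg b) t = m.foldl (fun a b => a * xg b) (s * t) := by
    intro m
    induction m with
    | nil => intro s t; rfl
    | cons h m ih =>
      intro s t
      simp only [List.foldl_cons]
      rw [ih, mul_assoc]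
  have hwnil : ∀ g : X, wordOf g [] = xg g := fun _ => rfl
  have hwmul : ∀ (g h : X) (l m : List X),
      wordOf g l * wordOf h m = wordOf g (l ++ h :: m) := by
    intro g h l m
    simp only [wordOf]
    rw [hfoldl]
    have : l ++ h :: m = (l ++ [h]) ++ m := by simp
    rw [this, List.foldl_append, List.foldl_append, List.foldl_cons, List.foldl_nil]
  -- every element is a word
  have hmk : ∀ (h : X) (t : List X),
      ((conGen (FactRel G O)).toQuotient ⟨h, t⟩ : FactS G O) = wordOf h t := by
    intro h t
    induction t generalizing h with
    | nil => rfl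
    | cons a t ih =>
      have : (⟨h, a :: t⟩ : FreeSemigroup X) = FreeSemigroup.of h * ⟨a, t⟩ := rfl
      rw [this, hcoe, ih]
      have : ((conGen (FactRel G O)).toQuotient (FreeSemigroup.of h) : FactS G O) = wordOf h [] := rfl
      erw [this, hwmul]
      simp
      rfl
  have hrepr : ∀ s : FactS G O, ∃ (g : X) (l : List X), s = wordOf g l := by
    intro s
    induction s using Con.induction_on with
    | H x =>
      obtain ⟨h, t⟩ := x
      exact ⟨h, t, hmk h t⟩
  -- ρ g fixes x_g
  have hfix : ∀ g : X, ρ (g : G) (xg g) = xg g := by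
    rintro ⟨g, hg⟩
    rw [hρ g g hg]
    exact congrArg xg (Subtype.ext (by group))
  -- basic commutation with a generator
  have hA1 : ∀ (u : FactS G O) (h : X), u * xg h = xg h * ρ ((h : G))⁻¹ u := by
    intro u h
    induction u using Con.induction_on with
    | H x =>
      induction x using FreeSemigroup.recOnMul with
      | ih1 g =>
        obtain ⟨g, hg⟩ := g
        obtain ⟨h, hh⟩ := h
        have mem : (h : G)⁻¹ * g * h ∈ O := hO g hg h
        have hrel : (conGen (FactRel G O))
            (FreeSemigroup.of ⟨g, hg⟩ * FreeSemigroup.of ⟨h, hh⟩)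
            (FreeSemigroup.of ⟨h, hh⟩ * FreeSemigroup.of ⟨h⁻¹ * g * h, mem⟩) :=
          ConGen.Rel.of _ _ (FactRel.rel ⟨g, hg⟩ ⟨h, hh⟩ mem)
        have e1 : (xg ⟨g, hg⟩ : FactS G O) * xg ⟨h, hh⟩
            = xg ⟨h, hh⟩ * xg ⟨h⁻¹ * g * h, mem⟩ := (Con.eq _).mpr hrel
        have e2 : ρ ((h : G))⁻¹ ((conGen (FactRel G O)).toQuotient (FreeSemigroup.of ⟨g, hg⟩))
            = xg ⟨h⁻¹ * g * h, mem⟩ :=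
          (hρ h⁻¹ g hg).trans (congrArg xg (Subtype.ext (show h⁻¹ * g * h⁻¹⁻¹ = h⁻¹ * g * h by rw [inv_inv])))
        rw [e2]
        exact e1
      | ih2 x y ihx ihy =>
        erw [hcoe, mul_assoc, ihy, ← mul_assoc, ihx, mul_assoc, ← map_mul]; rfl
  -- general commutation
  have hA : ∀ (u t : FactS G O), u * t = t * ρ ((α t))⁻¹ u := by
    intro u t
    induction t using Con.induction_on with
    | H x =>
      induction x using FreeSemigroup.recOnMul generalizing u with
      | ih1 g =>
        have h1' : ((conGen (FactRel G O)).toQuotient (FreeSemigroup.of g) : FactS G O) = xg g :=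
          rfl
        rw [h1', hα g]
        exact hA1 u g
      | ih2 x y ihx ihy =>
        erw [hcoe, ← mul_assoc, ihx, mul_assoc, ihy, ← mul_assoc, ← MulAut.mul_apply,
          ← map_mul, ← mul_inv_rev, ← map_mul]; rfl
  -- leading-letter lemma
  have hC : ∀ (g : X) (r : FactS G O), α (xg g * r) = 1 → ρ (g : G) (xg g * r) = xg g * r := by
    intro g r hs
    have hr : α r = ((g : G))⁻¹ := by
      rw [map_mul, hα] at hs
      exact eq_inv_of_mul_eq_one_right hs
    have e1 : xg g * r = r * xg g := by
      rw [hA (xg g) r, hr, inv_inv, hfix]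
    rw [e1, map_mul, hfix, hA1 (ρ (g : G) r) g, ← MulAut.mul_apply, ← map_mul,
      inv_mul_cancel, map_one, MulAut.one_apply, ← e1]
  -- rotation lemma
  have hrot : ∀ (g h : X) (l' : List X), α (wordOf g (h :: l')) = 1 →
      wordOf g (h :: l') = wordOf h (l' ++ [g]) := by
    intro g h l' hs
    have e0 : wordOf g (h :: l') = xg g * wordOf h l' := by
      rw [← hwnil g, hwmul]; simp
    have hr : α (wordOf h l') = ((g : G))⁻¹ := by
      rw [e0, map_mul, hα] at hs
      exact eq_inv_of_mul_eq_one_right hs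
    rw [e0, hA (xg g) (wordOf h l'), hr, inv_inv, hfix, ← hwnil g, hwmul]
  -- every letter fixes the word
  have hkey : ∀ (n : ℕ) (g : X) (l : List X) (x : X), α (wordOf g l) = 1 →
      (g :: l)[n]? = some x → ρ (x : G) (wordOf g l) = wordOf g l := by
    intro n
    induction n with
    | zero =>
      intro g l x hs hget
      simp only [List.getElem?_cons_zero, Option.some.injEq] at hget
      subst hget
      cases l with
      | nil =>
        exfalso
        rw [hwnil, hα] at hs
        exact h1 (hs ▸ g.2)
      | cons h l' =>
        have e0 : wordOf g (h :: l') = xg g * wordOf h l' := by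
          rw [← hwnil g, hwmul]; simp
        rw [e0] at hs ⊢
        exact hC g (wordOf h l') hs
    | succ n ih =>
      intro g l x hs hget
      cases l with
      | nil => simp at hget
      | cons h l' =>
        have hrw := hrot g h l' hs
        have hs' : α (wordOf h (l' ++ [g])) = 1 := by rw [← hrw]; exact hs
        have hget' : (h :: (l' ++ [g]))[n]? = some x := by
          simp only [List.getElem?_cons_succ] at hget
          have hn : n < (h :: l').length := by
            rcases List.getElem?_eq_some_iff.mp hget with ⟨hlt, _⟩
            exact hlt
          have : (h :: (l' ++ [g])) = (h :: l') ++ [g] := by simp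
          rw [this, List.getElem?_append_left hn]
          exact hget
        have := ih h (l' ++ [g]) x hs' hget'
        rw [hrw]
        exact this
  -- conclusion
  intro s hs1 hsT g0
  obtain ⟨g, l, rfl⟩ := hrepr s
  set s := wordOf g l with hsdef
  let H : Subgroup G :=
    { carrier := {h : G | ρ h s = s}
      one_mem' := by simp [Set.mem_setOf_eq, map_one]
      mul_mem' := by
        intro a b ha hb
        simp only [Set.mem_setOf_eq] at *
        rw [map_mul, MulAut.mul_apply, hb, ha]
      inv_mem' := by
        intro a ha
        simp only [Set.mem_setOf_eq] at *
        calc ρ a⁻¹ s = ρ a⁻¹ (ρ a s) := by rw [ha]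
        _ = s := by rw [← MulAut.mul_apply, ← map_mul, inv_mul_cancel, map_one, MulAut.one_apply]
    }
  have hsub : {a : G | a ∈ (g :: l).map Subtype.val} ⊆ (H : Set G) := by
    intro a ha
    simp only [Set.mem_setOf_eq, List.mem_map] at ha
    obtain ⟨x, hx, rfl⟩ := ha
    obtain ⟨n, hn⟩ := List.mem_iff_getElem?.mp hx
    exact hkey n g l x hs1 hn
  have htop : (⊤ : Subgroup G) ≤ H := by
    rw [← hsT, hsdef, hGs g l]
    exact (Subgroup.closure_le H).mpr hsub
  exact htop (Subgroup.mem_top g0)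
end

section
/- In the strong covering semigroup 𝕊(G,O), the map α defined on generators by α(x_g) = g and α(y_{a,b}) = [a,b] = aba^{-1}b^{-1} extends to a well-defined semigroup homomorphism 𝕊(G,O) → G, i.e., it respects all five defining relations. -/
/-- Conjugation `g^k = k⁻¹ g k`. -/
def cnj {G : Type} [Group G] (k g : G) : G := k⁻¹ * g * k

/-- Commutator `[a,b] = a b a⁻¹ b⁻¹`. -/
def cmm {G : Type} [Group G] (a b : G) : G := a * b * a⁻¹ * b⁻¹

/-- The defining relations of the strong covering semigroup `𝕊(G,O)`, on the
generators `x_g` (`g ∈ O`, encoded by `Sum.inl`) and `y_{a,b}` (`a,b ∈ G`,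
encoded by `Sum.inr`). -/
inductive CovRel (G : Type) [Group G] (O : Set G) :
    FreeSemigroup ({g : G // g ∈ O} ⊕ G × G) →
    FreeSemigroup ({g : G // g ∈ O} ⊕ G × G) → Prop
  | rel1 (g₁ g₂ : {g : G // g ∈ O}) (h : cnj (g₂ : G) g₁ ∈ O) :
      CovRel G O (FreeSemigroup.of (.inl g₁) * FreeSemigroup.of (.inl g₂))
        (FreeSemigroup.of (.inl g₂) * FreeSemigroup.of (.inl ⟨cnj (g₂ : G) g₁, h⟩))
  | rel2 (g : {g : G // g ∈ O}) (a b : G) (h : cnj (cmm a b) g ∈ O) :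
      CovRel G O (FreeSemigroup.of (.inl g) * FreeSemigroup.of (.inr (a, b)))
        (FreeSemigroup.of (.inr (a, b)) *
          FreeSemigroup.of (.inl ⟨cnj (cmm a b) g, h⟩))
  | rel3 (g : {g : G // g ∈ O}) (a b : G)
      (h : cnj (a * b⁻¹ * a⁻¹ * (g : G)⁻¹) g ∈ O) :
      CovRel G O (FreeSemigroup.of (.inl g) * FreeSemigroup.of (.inr (a, b)))
        (FreeSemigroup.of (.inl ⟨cnj (a * b⁻¹ * a⁻¹ * (g : G)⁻¹) g, h⟩) *
          FreeSemigroup.of (.inr ((g : G) * a, b)))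
  | rel4 (g : {g : G // g ∈ O}) (a b : G)
      (h : cnj (b * a⁻¹ * b⁻¹ * (g : G)) g ∈ O) :
      CovRel G O (FreeSemigroup.of (.inr (a, b)) * FreeSemigroup.of (.inl g))
        (FreeSemigroup.of (.inr (a, (g : G)⁻¹ * b)) *
          FreeSemigroup.of (.inl ⟨cnj (b * a⁻¹ * b⁻¹ * (g : G)) g, h⟩))
  | rel5 (g : {g : G // g ∈ O}) (a b : G) (h : cnj (cmm a b) g ∈ O) :
      CovRel G O (FreeSemigroup.of (.inl g) * FreeSemigroup.of (.inr (a, b)))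
        (FreeSemigroup.of (.inl ⟨cnj (cmm a b) g, h⟩) *
          FreeSemigroup.of
            (.inr (cnj (cnj (cmm a b) g) a, cnj (cnj (cmm a b) g) b)))

/-- The strong covering semigroup `𝕊(G,O)`. -/
def CovS (G : Type) [Group G] (O : Set G) :=
  (conGen (CovRel G O)).Quotient

instance (G : Type) [Group G] (O : Set G) : Semigroup (CovS G O) :=
  Con.semigroup _

/-- The generator `x_g` of `𝕊(G,O)`. -/
def Xg {G : Type} [Group G] {O : Set G} (g : {g : G // g ∈ O}) : CovS G O :=
  (conGen (CovRel G O)).toQuotient (FreeSemigroup.of (.inl g))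

/-- The generator `y_{a,b}` of `𝕊(G,O)`. -/
def Yg {G : Type} [Group G] {O : Set G} (a b : G) : CovS G O :=
  (conGen (CovRel G O)).toQuotient (FreeSemigroup.of (.inr (a, b)))

theorem stmt13 (G : Type) [Group G] (O : Set G) (h1 : (1 : G) ∉ O)
    (hO : ∀ g ∈ O, ∀ h : G, h⁻¹ * g * h ∈ O) :
    ∃ α : CovS G O →ₙ* G,
      (∀ g : {g : G // g ∈ O}, α (Xg g) = (g : G)) ∧
      ∀ a b : G, α (Yg a b) = a * b * a⁻¹ * b⁻¹ := by
  let f : FreeSemigroup ({g : G // g ∈ O} ⊕ G × G) →ₙ* G :=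
    FreeSemigroup.lift (Sum.elim (fun g => (g : G)) (fun p : G × G => cmm p.1 p.2))
  have hker : ∀ x y, CovRel G O x y → f x = f y := by
    intro x y hxy
    cases hxy with
    | rel1 g₁ g₂ h =>
        simp only [map_mul, FreeSemigroup.lift_of, Sum.elim_inl, Sum.elim_inr, f,
          cnj, cmm]
        group
    | rel2 g a b h =>
        simp only [map_mul, FreeSemigroup.lift_of, Sum.elim_inl, Sum.elim_inr, f,
          cnj, cmm]
        group
    | rel3 g a b h =>
        simp only [map_mul, FreeSemigroup.lift_of, Sum.elim_inl, Sum.elim_inr, f,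
          cnj, cmm]
        group
    | rel4 g a b h =>
        simp only [map_mul, FreeSemigroup.lift_of, Sum.elim_inl, Sum.elim_inr, f,
          cnj, cmm]
        group
    | rel5 g a b h =>
        simp only [map_mul, FreeSemigroup.lift_of, Sum.elim_inl, Sum.elim_inr, f,
          cnj, cmm]
        group
  have hker' : conGen (CovRel G O) ≤ Con.ker f :=
    Con.conGen_le.mpr (fun x y h => (Con.ker_rel f).mpr (hker x y h))
  refine ⟨⟨fun q => Con.liftOn q f (fun a b h => hker' h), ?_⟩, fun g => ?_, fun a b => ?_⟩
  · intro p q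
    refine Con.induction_on₂ p q (fun x y => ?_)
    show f (x * y) = f x * f y
    exact map_mul f x y
  · show f (FreeSemigroup.of (.inl g)) = (g : G)
    simp [f]
  · show f (FreeSemigroup.of (.inr (a, b))) = _
    simp [f, cmm]
end

section
/- In the strong covering semigroup 𝕊(G,O), relation (5) x_g·y_{a,b} = x_{g^{[a,b]}}·y_{a^{g^{[a,b]}}, b^{g^{[a,b]}}} is a consequence of relations (2), (3), and (4). -/
/-- Relations (2), (3), (4) of the strong covering semigroup, on the
generators `x_g` (`g ∈ O`, encoded by `Sum.inl`) and `y_{a,b}` (`a,b ∈ G`,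
encoded by `Sum.inr`). -/
inductive CovRel' (G : Type) [Group G] (O : Set G) :
    FreeSemigroup ({g : G // g ∈ O} ⊕ G × G) →
    FreeSemigroup ({g : G // g ∈ O} ⊕ G × G) → Prop
  | rel2 (g : {g : G // g ∈ O}) (a b : G) (h : cnj (cmm a b) g ∈ O) :
      CovRel' G O (FreeSemigroup.of (.inl g) * FreeSemigroup.of (.inr (a, b)))
        (FreeSemigroup.of (.inr (a, b)) *
          FreeSemigroup.of (.inl ⟨cnj (cmm a b) g, h⟩))
  | rel3 (g : {g : G // g ∈ O}) (a b : G)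
      (h : cnj (a * b⁻¹ * a⁻¹ * (g : G)⁻¹) g ∈ O) :
      CovRel' G O (FreeSemigroup.of (.inl g) * FreeSemigroup.of (.inr (a, b)))
        (FreeSemigroup.of (.inl ⟨cnj (a * b⁻¹ * a⁻¹ * (g : G)⁻¹) g, h⟩) *
          FreeSemigroup.of (.inr ((g : G) * a, b)))
  | rel4 (g : {g : G // g ∈ O}) (a b : G)
      (h : cnj (b * a⁻¹ * b⁻¹ * (g : G)) g ∈ O) :
      CovRel' G O (FreeSemigroup.of (.inr (a, b)) * FreeSemigroup.of (.inl g))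
        (FreeSemigroup.of (.inr (a, (g : G)⁻¹ * b)) *
          FreeSemigroup.of (.inl ⟨cnj (b * a⁻¹ * b⁻¹ * (g : G)) g, h⟩))

/-- The semigroup presented by the generators of `𝕊(G,O)` and the relations
(2), (3), (4) only. -/
def CovS' (G : Type) [Group G] (O : Set G) :=
  (conGen (CovRel' G O)).Quotient

instance (G : Type) [Group G] (O : Set G) : Semigroup (CovS' G O) :=
  Con.semigroup _

/-- The generator `x_g`. -/
def Xg' {G : Type} [Group G] {O : Set G} (g : {g : G // g ∈ O}) : CovS' G O :=
  (conGen (CovRel' G O)).toQuotient (FreeSemigroup.of (.inl g))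

/-- The generator `y_{a,b}`. -/
def Yg' {G : Type} [Group G] {O : Set G} (a b : G) : CovS' G O :=
  (conGen (CovRel' G O)).toQuotient (FreeSemigroup.of (.inr (a, b)))

namespace CovAux

variable {G : Type} [Group G] {O : Set G}

def X (k : G) (hk : k ∈ O) : FreeSemigroup ({g : G // g ∈ O} ⊕ G × G) :=
  FreeSemigroup.of (.inl ⟨k, hk⟩)

def Y (a b : G) : FreeSemigroup ({g : G // g ∈ O} ⊕ G × G) :=
  FreeSemigroup.of (.inr (a, b))

abbrev R (G : Type) [Group G] (O : Set G) := ConGen.Rel (CovRel' G O)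

lemma r2 {k k' a b : G} (hk : k ∈ O) (hk' : k' ∈ O) (e : k' = cnj (cmm a b) k) :
    R G O (X k hk * Y a b) (Y a b * X k' hk') := by
  subst e
  exact ConGen.Rel.of _ _ (CovRel'.rel2 ⟨k, hk⟩ a b hk')

lemma r3 {k k' a a' b : G} (hk : k ∈ O) (hk' : k' ∈ O)
    (e : k' = cnj (a * b⁻¹ * a⁻¹ * k⁻¹) k) (e2 : a' = k * a) :
    R G O (X k hk * Y a b) (X k' hk' * Y a' b) := by
  subst e; subst e2
  exact ConGen.Rel.of _ _ (CovRel'.rel3 ⟨k, hk⟩ a b hk')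

lemma r4 {k k' a b b' : G} (hk : k ∈ O) (hk' : k' ∈ O)
    (e : k' = cnj (b * a⁻¹ * b⁻¹ * k) k) (e2 : b' = k⁻¹ * b) :
    R G O (Y a b * X k hk) (Y a b' * X k' hk') := by
  subst e; subst e2
  exact ConGen.Rel.of _ _ (CovRel'.rel4 ⟨k, hk⟩ a b hk')

end CovAux

namespace CovAux

variable {G : Type} [Group G] {O : Set G}

lemma chain {g a b K1 Q2 K2 K3 a4 K4 K5 Q6 K6 K7 a8 : G}
    (hg : g ∈ O) (hK1 : K1 ∈ O) (hK2 : K2 ∈ O) (hK3 : K3 ∈ O)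
    (hK4 : K4 ∈ O) (hK5 : K5 ∈ O) (hK6 : K6 ∈ O) (hK7 : K7 ∈ O)
    (E1 : K1 = cnj (cmm a b) g)
    (E2 : Q2 = K1⁻¹ * b)
    (E3 : K2 = cnj (b * a⁻¹ * b⁻¹ * K1) K1)
    (E4 : K2 = cnj (cmm a Q2) K3)
    (E5 : a4 = K3 * a)
    (E6 : K4 = cnj (a * Q2⁻¹ * a⁻¹ * K3⁻¹) K3)
    (E7 : K5 = cnj (cmm a4 Q2) K4)
    (E8 : K5 = cnj (Q6 * a4⁻¹ * Q6⁻¹ * K6) K6)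
    (E9 : Q2 = K6⁻¹ * Q6)
    (E10 : K6 = cnj (cmm a4 Q6) K7)
    (E11 : K7 = cnj (a8 * Q6⁻¹ * a8⁻¹ * K1⁻¹) K1)
    (E12 : a4 = K1 * a8) :
    R G O (X g hg * Y a b) (X K1 hK1 * Y a8 Q6) := by
  refine (r2 hg hK1 E1).trans ?_
  refine (r4 hK1 hK2 E3 E2).trans ?_
  refine ((r2 hK3 hK2 E4).symm).trans ?_
  refine (r3 hK3 hK4 E6 E5).trans ?_
  refine (r2 hK4 hK5 E7).trans ?_
  refine ((r4 hK6 hK5 E8 E9).symm).trans ?_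
  refine ((r2 hK7 hK6 E10).symm).trans ?_
  exact (r3 hK1 hK7 E11 E12).symm

end CovAux


/-- Relation (5) is a consequence of relations (2), (3), (4). -/
theorem stmt14 (G : Type) [Group G] (O : Set G) (h1 : (1 : G) ∉ O)
    (hO : ∀ g ∈ O, ∀ h : G, h⁻¹ * g * h ∈ O) :
    ∀ (g : G) (hg : g ∈ O) (a b : G),
      Xg' ⟨g, hg⟩ * Yg' a b =
        Xg' (⟨cnj (cmm a b) g, hO g hg (cmm a b)⟩ : {g : G // g ∈ O}) *
          Yg' (cnj (cnj (cmm a b) g) a) (cnj (cnj (cmm a b) g) b) := by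
  intro g hg a b
  have memCnj : ∀ {x : G}, x ∈ O → ∀ k : G, cnj k x ∈ O := fun hx k => hO _ hx k
  have memConj : ∀ {x : G}, x ∈ O → ∀ k : G, k * x * k⁻¹ ∈ O := by
    intro x hx k
    have := hO x hx k⁻¹
    simpa using this
  set K1 : G := cnj (cmm a b) g with hK1def
  set Q2 : G := K1⁻¹ * b with hQ2def
  set K2 : G := cnj (b * a⁻¹ * b⁻¹ * K1) K1 with hK2def
  set K3 : G := a * K1 * a⁻¹ with hK3def
  set a4 : G := K3 * a with ha4def
  set K4 : G := cnj (a * Q2⁻¹ * a⁻¹ * K3⁻¹) K3 with hK4def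
  set K5 : G := cnj (cmm a4 Q2) K4 with hK5def
  set Q6 : G := cnj K1 b with hQ6def
  set K6 : G := Q2 * K1 * Q2⁻¹ with hK6def
  set K7 : G := cmm a4 Q6 * K6 * (cmm a4 Q6)⁻¹ with hK7def
  set a8 : G := cnj K1 a with ha8def
  have hK1 : K1 ∈ O := memCnj hg _
  have hK2 : K2 ∈ O := memCnj hK1 _
  have hK3 : K3 ∈ O := memConj hK1 _
  have hK4 : K4 ∈ O := memCnj hK3 _
  have hK5 : K5 ∈ O := memCnj hK4 _
  have hK6 : K6 ∈ O := memConj hK1 _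
  have hK7 : K7 ∈ O := memConj hK6 _
  have key : CovAux.R G O (CovAux.X g hg * CovAux.Y a b)
      (CovAux.X K1 hK1 * CovAux.Y a8 Q6) := by
    refine CovAux.chain hg hK1 hK2 hK3 hK4 hK5 hK6 hK7 rfl rfl rfl ?_ rfl rfl rfl ?_ ?_ ?_ ?_ ?_
    · simp only [hK2def, hK3def, hQ2def, hK1def, cnj, cmm, mul_assoc, mul_inv_rev, inv_inv, inv_mul_cancel_left, mul_inv_cancel_left, inv_mul_cancel, mul_inv_cancel, one_mul, mul_one]
    · simp only [hK5def, hK4def, hK6def, hK7def, ha4def, hK3def, hQ2def, hQ6def, hK1def, cnj, cmm, mul_assoc, mul_inv_rev, inv_inv, inv_mul_cancel_left, mul_inv_cancel_left, inv_mul_cancel, mul_inv_cancel, one_mul, mul_one]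
    · simp only [hK6def, hQ2def, hQ6def, hK1def, cnj, cmm, mul_assoc, mul_inv_rev, inv_inv, inv_mul_cancel_left, mul_inv_cancel_left, inv_mul_cancel, mul_inv_cancel, one_mul, mul_one]
    · simp only [hK6def, hK7def, ha4def, hK3def, hQ2def, hQ6def, hK1def, cnj, cmm, mul_assoc, mul_inv_rev, inv_inv, inv_mul_cancel_left, mul_inv_cancel_left, inv_mul_cancel, mul_inv_cancel, one_mul, mul_one]
    · simp only [hK7def, hK6def, ha8def, ha4def, hK3def, hQ2def, hQ6def, hK1def, cnj, cmm, mul_assoc, mul_inv_rev, inv_inv, inv_mul_cancel_left, mul_inv_cancel_left, inv_mul_cancel, mul_inv_cancel, one_mul, mul_one]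
    · simp only [ha4def, hK3def, ha8def, hK1def, cnj, cmm, mul_assoc, mul_inv_rev, inv_inv, inv_mul_cancel_left, mul_inv_cancel_left, inv_mul_cancel, mul_inv_cancel, one_mul, mul_one]
  exact (Con.eq _).mpr key
end

section
/- For any finite subset O of a group G, any g1,...,gn ∈ O, a1,b1,...,ak,bk ∈ G, any g ∈ O, any h in the subgroup generated by g1,...,gn,a1,b1,...,ak,bk, and any s ∈ S(G,O) with α(s) = g^{-1}, the equation x_{g1}·...·x_{gn}·x_g·s·y_{a1,b1}·...·y_{ak,bk} = x_{g1}·...·x_{gn}·x_{h^{-1}gh}·z·y_{a1,b1}·...·y_{ak,bk} has a solution z ∈ S(G,O) in the strong covering semigroup 𝕊(G,O). -/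
namespace P17

variable {G : Type} [Group G] {O : Set G}

lemma xeq {m m' : {g : G // g ∈ O}} (h : (m : G) = (m' : G)) : Xg m = Xg m' := by
  cases Subtype.ext h; rfl

lemma crel {x y : FreeSemigroup ({g : G // g ∈ O} ⊕ G × G)} (h : CovRel G O x y) :
    ((x : (conGen (CovRel G O)).Quotient) : CovS G O) = (y : (conGen (CovRel G O)).Quotient) :=
  (Con.eq _).mpr (ConGen.Rel.of _ _ h)

lemma tq_mul (x y : FreeSemigroup ({g : G // g ∈ O} ⊕ G × G)) :
    ((conGen (CovRel G O)).toQuotient (x * y) : CovS G O)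
      = @HMul.hMul (CovS G O) (CovS G O) (CovS G O) _ ((conGen (CovRel G O)).toQuotient x) ((conGen (CovRel G O)).toQuotient y) := rfl

variable (hO : ∀ g ∈ O, ∀ h : G, h⁻¹ * g * h ∈ O)

lemma memc (hO : ∀ g ∈ O, ∀ h : G, h⁻¹ * g * h ∈ O) (k : G) (m : {g : G // g ∈ O}) : cnj k (m : G) ∈ O := by
  simpa [cnj] using hO m m.2 k

/-- rel1 wrapper -/
lemma R1 (m c : {g : G // g ∈ O}) :
    Xg m * Xg c = Xg c * Xg ⟨cnj (c : G) m, memc hO _ m⟩ :=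
  crel (CovRel.rel1 m c _)

lemma R2 (m : {g : G // g ∈ O}) (a b : G) :
    Xg m * Yg a b = Yg a b * Xg ⟨cnj (cmm a b) m, memc hO _ m⟩ :=
  crel (CovRel.rel2 m a b _)

lemma R3 (m : {g : G // g ∈ O}) (a b : G) :
    Xg m * Yg a b = Xg ⟨cnj (a * b⁻¹ * a⁻¹ * (m : G)⁻¹) m, memc hO _ m⟩ * Yg ((m : G) * a) b :=
  crel (CovRel.rel3 m a b _)

lemma R4 (m : {g : G // g ∈ O}) (a b : G) :
    Yg a b * Xg m = Yg a ((m : G)⁻¹ * b) * Xg ⟨cnj (b * a⁻¹ * b⁻¹ * (m : G)) m, memc hO _ m⟩ :=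
  crel (CovRel.rel4 m a b _)

lemma R5 (m : {g : G // g ∈ O}) (a b : G) :
    Xg m * Yg a b = Xg ⟨cnj (cmm a b) m, memc hO _ m⟩ *
      Yg (cnj (cnj (cmm a b) m) a) (cnj (cnj (cmm a b) m) b) :=
  crel (CovRel.rel5 m a b _)

end P17

namespace P17
variable {G : Type} [Group G] {O : Set G}

/-- conjugation on letters -/
def sig (hO : ∀ g ∈ O, ∀ h : G, h⁻¹ * g * h ∈ O) (h : G) :
    ({g : G // g ∈ O} ⊕ G × G) → ({g : G // g ∈ O} ⊕ G × G)
  | .inl m => .inl ⟨h⁻¹ * m * h, hO m m.2 h⟩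
  | .inr (a, b) => .inr (h⁻¹ * a * h, h⁻¹ * b * h)

section
variable (hO : ∀ g ∈ O, ∀ h : G, h⁻¹ * g * h ∈ O)

lemma sig_resp (h : G) {x y : FreeSemigroup ({g : G // g ∈ O} ⊕ G × G)}
    (hxy : ConGen.Rel (CovRel G O) x y) :
    ConGen.Rel (CovRel G O) (FreeSemigroup.map (sig hO h) x) (FreeSemigroup.map (sig hO h) y) := by
  induction hxy with
  | of x y hr =>
    apply ConGen.Rel.of
    cases hr with
    | rel1 g₁ g₂ hm =>
      simp only [map_mul, FreeSemigroup.map_of, sig]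
      convert CovRel.rel1 (⟨h⁻¹*g₁*h, hO _ g₁.2 h⟩ : {g : G // g ∈ O})
        (⟨h⁻¹*g₂*h, hO _ g₂.2 h⟩ : {g : G // g ∈ O}) (memc hO _ _) using 4
      simp [cnj]; group
    | rel2 g a b hm =>
      simp only [map_mul, FreeSemigroup.map_of, sig]
      convert CovRel.rel2 (⟨h⁻¹*g*h, hO _ g.2 h⟩ : {g : G // g ∈ O})
        (h⁻¹*a*h) (h⁻¹*b*h) (memc hO _ _) using 4
      simp [cnj, cmm]; group
    | rel3 g a b hm =>
      simp only [map_mul, FreeSemigroup.map_of, sig]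
      convert CovRel.rel3 (⟨h⁻¹*g*h, hO _ g.2 h⟩ : {g : G // g ∈ O})
        (h⁻¹*a*h) (h⁻¹*b*h) (memc hO _ _) using 4
      · simp [cnj]; group
      · simp only [Prod.mk.injEq]
        constructor
        · show h⁻¹ * ((g:G) * a) * h = (h⁻¹*(g:G)*h) * (h⁻¹*a*h)
          group
        · trivial
    | rel4 g a b hm =>
      simp only [map_mul, FreeSemigroup.map_of, sig]
      convert CovRel.rel4 (⟨h⁻¹*g*h, hO _ g.2 h⟩ : {g : G // g ∈ O})
        (h⁻¹*a*h) (h⁻¹*b*h) (memc hO _ _) using 4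
      · simp only [Prod.mk.injEq]
        constructor
        · trivial
        · show h⁻¹ * ((g:G)⁻¹ * b) * h = (h⁻¹*(g:G)*h)⁻¹ * (h⁻¹*b*h)
          group
      · simp [cnj]; group
    | rel5 g a b hm =>
      simp only [map_mul, FreeSemigroup.map_of, sig]
      convert CovRel.rel5 (⟨h⁻¹*g*h, hO _ g.2 h⟩ : {g : G // g ∈ O})
        (h⁻¹*a*h) (h⁻¹*b*h) (memc hO _ _) using 4
      · simp [cnj, cmm]; group
      · simp only [Prod.mk.injEq]
        constructor
        · show h⁻¹ * (cnj (cnj (cmm a b) (g:G)) a) * h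
              = cnj (cnj (cmm (h⁻¹*a*h) (h⁻¹*b*h)) (h⁻¹*(g:G)*h)) (h⁻¹*a*h)
          simp only [cnj, cmm]; group
        · show h⁻¹ * (cnj (cnj (cmm a b) (g:G)) b) * h
              = cnj (cnj (cmm (h⁻¹*a*h) (h⁻¹*b*h)) (h⁻¹*(g:G)*h)) (h⁻¹*b*h)
          simp only [cnj, cmm]; group
  | refl x => exact ConGen.Rel.refl _
  | symm _ ih => exact ConGen.Rel.symm ih
  | trans _ _ ih1 ih2 => exact ConGen.Rel.trans ih1 ih2
  | mul _ _ ih1 ih2 => simp only [map_mul]; exact ConGen.Rel.mul ih1 ih2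

/-- conjugation endomorphism of the covering semigroup -/
def phi (h : G) : CovS G O → CovS G O :=
  Quotient.map' (FreeSemigroup.map (sig hO h)) (fun _ _ hxy => sig_resp hO h hxy)

lemma phi_mk (h : G) (x : FreeSemigroup ({g : G // g ∈ O} ⊕ G × G)) :
    phi hO h ((conGen (CovRel G O)).toQuotient x)
      = (conGen (CovRel G O)).toQuotient (FreeSemigroup.map (sig hO h) x) := rfl

lemma phi_mul (h : G) (x y : CovS G O) :
    phi hO h (x * y) = phi hO h x * phi hO h y := by
  induction x using Con.induction_on with
  | _ x =>
    induction y using Con.induction_on with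
    | _ y =>
      show phi hO h ((conGen (CovRel G O)).toQuotient (x * y)) = _
      rw [phi_mk, map_mul]
      rfl

lemma phi_x (h : G) (m : {g : G // g ∈ O}) :
    phi hO h (Xg m) = Xg ⟨h⁻¹ * m * h, hO m m.2 h⟩ := rfl

lemma phi_y (h : G) (a b : G) :
    phi hO h (Yg a b) = Yg (h⁻¹ * a * h) (h⁻¹ * b * h) := rfl

lemma phi_phi (h h' : G) (x : CovS G O) :
    phi hO h (phi hO h' x) = phi hO (h' * h) x := by
  induction x using Con.induction_on with
  | _ x =>
    induction x using FreeSemigroup.recOnMul with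
    | ih1 l =>
      rcases l with m | ⟨a, b⟩
      · show phi hO h (phi hO h' (Xg m)) = phi hO (h'*h) (Xg m)
        rw [phi_x, phi_x, phi_x]
        exact xeq (by group)
      · show phi hO h (phi hO h' (Yg a b)) = phi hO (h'*h) (Yg a b)
        rw [phi_y, phi_y, phi_y]
        congr 1 <;> group
    | ih2 x y ih1 ih2 =>
      erw [tq_mul, phi_mul, phi_mul, phi_mul, ih1, ih2]

lemma phi_one (x : CovS G O) : phi hO 1 x = x := by
  induction x using Con.induction_on with
  | _ x =>
    induction x using FreeSemigroup.recOnMul with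
    | ih1 l =>
      rcases l with m | ⟨a, b⟩
      · show phi hO 1 (Xg m) = Xg m
        rw [phi_x]; exact xeq (by group)
      · show phi hO 1 (Yg a b) = Yg a b
        rw [phi_y]; congr 1 <;> group
    | ih2 x y ih1 ih2 =>
      erw [tq_mul, phi_mul, ih1, ih2]

lemma phi_inv_phi (h : G) (x : CovS G O) : phi hO h (phi hO h⁻¹ x) = x := by
  rw [phi_phi, inv_mul_cancel, phi_one]

end
end P17

namespace P17
variable {G : Type} [Group G] {O : Set G}

abbrev SS (G : Type) [Group G] (O : Set G) : Subsemigroup (CovS G O) :=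
  Subsemigroup.closure (Set.range (Xg : {g : G // g ∈ O} → CovS G O))

lemma xg_mem (m : {g : G // g ∈ O}) : Xg m ∈ SS G O :=
  Subsemigroup.subset_closure ⟨m, rfl⟩

section
variable (hO : ∀ g ∈ O, ∀ h : G, h⁻¹ * g * h ∈ O)
variable (α : CovS G O →ₙ* G)
variable (hαx : ∀ g : {g : G // g ∈ O}, α (Xg g) = (g : G))
variable (hαy : ∀ a b : G, α (Yg a b) = a * b * a⁻¹ * b⁻¹)
include hO hαx

/-- move an X-letter from left to right across a word of S -/
lemma xmul {t : CovS G O} (ht : t ∈ SS G O) :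
    ∀ m : {g : G // g ∈ O}, Xg m * t = t * Xg ⟨(α t)⁻¹ * ↑m * α t, hO ↑m m.2 (α t)⟩ := by
  induction ht using Subsemigroup.closure_induction with
  | mem x hx =>
    intro m
    obtain ⟨m₀, rfl⟩ := hx
    rw [R1 hO m m₀]
    exact congrArg (fun z => Xg m₀ * z) (xeq (by simp [cnj, hαx]))
  | mul x y hx hy ihx ihy =>
    intro m
    calc Xg m * (x * y) = (Xg m * x) * y := by rw [mul_assoc]
      _ = x * (Xg ⟨(α x)⁻¹ * ↑m * α x, hO ↑m m.2 (α x)⟩ * y) := by rw [ihx, mul_assoc]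
      _ = x * (y * Xg ⟨(α y)⁻¹ * ((α x)⁻¹ * ↑m * α x) * α y,
            hO _ (hO ↑m m.2 (α x)) (α y)⟩) := by
            rw [ihy ⟨(α x)⁻¹ * ↑m * α x, hO ↑m m.2 (α x)⟩]
      _ = (x * y) * Xg ⟨(α (x*y))⁻¹ * ↑m * α (x*y), hO ↑m m.2 (α (x*y))⟩ := by
            rw [← mul_assoc]
            exact congrArg (fun z => x * y * z) (xeq (by simp [map_mul]; group))

/-- membership of phi image -/
lemma phi_mem (h : G) {t : CovS G O} (ht : t ∈ SS G O) : phi hO h t ∈ SS G O := by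
  induction ht using Subsemigroup.closure_induction with
  | mem x hx => obtain ⟨m, rfl⟩ := hx; rw [phi_x]; exact xg_mem _
  | mul x y hx hy ihx ihy => rw [phi_mul]; exact Subsemigroup.mul_mem _ ihx ihy

lemma alpha_phi (h : G) {t : CovS G O} (ht : t ∈ SS G O) :
    α (phi hO h t) = h⁻¹ * α t * h := by
  induction ht using Subsemigroup.closure_induction with
  | mem x hx => obtain ⟨m, rfl⟩ := hx; rw [phi_x, hαx, hαx]
  | mul x y hx hy ihx ihy =>
    rw [phi_mul, map_mul, ihx, ihy, map_mul]; group

/-- move a word of S from left to right across a word of S -/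
lemma tmul {t r : CovS G O} (ht : t ∈ SS G O) (hr : r ∈ SS G O) :
    r * t = t * phi hO (α t) r := by
  induction hr using Subsemigroup.closure_induction with
  | mem x hx =>
    obtain ⟨m, rfl⟩ := hx
    rw [phi_x, xmul hO α hαx ht m]
  | mul x y hx hy ihx ihy =>
    calc x * y * t = x * (t * phi hO (α t) y) := by rw [mul_assoc, ihy]
      _ = (t * phi hO (α t) x) * phi hO (α t) y := by rw [← mul_assoc, ihx]
      _ = t * phi hO (α t) (x * y) := by rw [phi_mul, mul_assoc]

/-- move a word of S from left to right across a Y-letter (rel2) -/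
lemma ymul {t : CovS G O} (ht : t ∈ SS G O) (a b : G) :
    t * Yg a b = Yg a b * phi hO (cmm a b) t := by
  induction ht using Subsemigroup.closure_induction with
  | mem x hx =>
    obtain ⟨m, rfl⟩ := hx
    rw [phi_x, R2 hO m a b]
    exact congrArg (fun z => Yg a b * z) (xeq (by simp [cnj]))
  | mul x y hx hy ihx ihy =>
    calc x * y * Yg a b = x * (Yg a b * phi hO (cmm a b) y) := by rw [mul_assoc, ihy]
      _ = (Yg a b * phi hO (cmm a b) x) * phi hO (cmm a b) y := by rw [← mul_assoc, ihx]
      _ = Yg a b * phi hO (cmm a b) (x * y) := by rw [phi_mul, mul_assoc]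

/-- derived relation: Y a b * X m = X m * Y (a^m) (b^m)  -/
lemma R25 (m : {g : G // g ∈ O}) (a b : G) :
    Yg a b * Xg m = Xg m * Yg ((m:G)⁻¹*a*(m:G)) ((m:G)⁻¹*b*(m:G)) := by
  have pf : cmm a b * ↑m * (cmm a b)⁻¹ ∈ O := by simpa using hO m m.2 (cmm a b)⁻¹
  have e1 : (⟨cnj (cmm a b) ((⟨cmm a b * ↑m * (cmm a b)⁻¹, pf⟩ : {g : G // g ∈ O}) : G),
      memc hO _ _⟩ : {g : G // g ∈ O}) = m := Subtype.ext (by simp [cnj]; group)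
  have h5 := R5 hO (⟨cmm a b * ↑m * (cmm a b)⁻¹, pf⟩ : {g : G // g ∈ O}) a b
  rw [e1] at h5
  have h2 := R2 hO (⟨cmm a b * ↑m * (cmm a b)⁻¹, pf⟩ : {g : G // g ∈ O}) a b
  rw [e1] at h2
  rw [← h2, h5]
  congr 2
  · show cnj (cnj (cmm a b) ((cmm a b * ↑m * (cmm a b)⁻¹ : G))) a = (m:G)⁻¹*a*(m:G)
    simp [cnj]; group
  · show cnj (cnj (cmm a b) ((cmm a b * ↑m * (cmm a b)⁻¹ : G))) b = (m:G)⁻¹*b*(m:G)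
    simp [cnj]; group

/-- move a Y-letter from left to right across a word of S -/
lemma yxmul {t : CovS G O} (ht : t ∈ SS G O) :
    ∀ a b : G, Yg a b * t = t * Yg ((α t)⁻¹*a*(α t)) ((α t)⁻¹*b*(α t)) := by
  induction ht using Subsemigroup.closure_induction with
  | mem x hx =>
    intro a b
    obtain ⟨m, rfl⟩ := hx
    rw [R25 hO α hαx m a b, hαx]
  | mul x y hx hy ihx ihy =>
    intro a b
    calc Yg a b * (x * y) = (Yg a b * x) * y := by rw [mul_assoc]
      _ = x * (Yg ((α x)⁻¹*a*(α x)) ((α x)⁻¹*b*(α x)) * y) := by rw [ihx a b, mul_assoc]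
      _ = x * (y * Yg ((α y)⁻¹*((α x)⁻¹*a*(α x))*(α y)) ((α y)⁻¹*((α x)⁻¹*b*(α x))*(α y))) := by
            rw [ihy ((α x)⁻¹*a*(α x)) ((α x)⁻¹*b*(α x))]
      _ = (x * y) * Yg ((α (x*y))⁻¹*a*(α (x*y))) ((α (x*y))⁻¹*b*(α (x*y))) := by
            rw [← mul_assoc]
            congr 2 <;> · simp [map_mul]; group

/-- a neutral word of S is central -/
lemma central {t : CovS G O} (ht : t ∈ SS G O) (hα1 : α t = 1) (d : CovS G O) :
    t * d = d * t := by
  induction d using Con.induction_on with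
  | _ x =>
    induction x using FreeSemigroup.recOnMul with
    | ih1 l =>
      rcases l with m | ⟨a, b⟩
      · show t * Xg m = Xg m * t
        rw [xmul hO α hαx ht m]
        exact (congrArg (fun z => t * z) (xeq (by simp [hα1]))).symm
      · show t * Yg a b = Yg a b * t
        rw [yxmul hO α hαx ht a b, hα1]
        simp
    | ih2 x y ih1 ih2 =>
      erw [tq_mul, ← mul_assoc, ih1, mul_assoc, ih2, ← mul_assoc]

end
end P17

namespace P17
variable {G : Type} [Group G] {O : Set G}

section
variable (hO : ∀ g ∈ O, ∀ h : G, h⁻¹ * g * h ∈ O)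
variable (α : CovS G O →ₙ* G)
variable (hαx : ∀ g : {g : G // g ∈ O}, α (Xg g) = (g : G))
include hO hαx

/-- processing a word of S through a Y-letter by rel3 -/
lemma rel3w {t : CovS G O} (ht : t ∈ SS G O) :
    ∀ a b : G, ∃ t', t' ∈ SS G O ∧ t * Yg a b = t' * Yg (α t * a) b := by
  induction ht using Subsemigroup.closure_induction with
  | mem x hx =>
    intro a b
    obtain ⟨m, rfl⟩ := hx
    refine ⟨Xg ⟨cnj (a * b⁻¹ * a⁻¹ * (↑m)⁻¹) ↑m, memc hO _ m⟩, xg_mem _, ?_⟩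
    rw [R3 hO m a b, hαx]
  | mul x y hx hy ihx ihy =>
    intro a b
    obtain ⟨ty, htyS, ey⟩ := ihy a b
    obtain ⟨tx, htxS, ex⟩ := ihx (α y * a) b
    refine ⟨tx * phi hO (cmm (α x * (α y * a)) b)⁻¹ (phi hO (cmm (α y * a) b) ty),
      Subsemigroup.mul_mem _ htxS (phi_mem hO α hαx _ (phi_mem hO α hαx _ htyS)), ?_⟩
    have c1 : x * y * Yg a b = x * (ty * Yg (α y * a) b) := by rw [mul_assoc, ey]
    have c2 : ty * Yg (α y * a) b = Yg (α y * a) b * phi hO (cmm (α y * a) b) ty :=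
      ymul hO α hαx htyS _ _
    have c4 : phi hO (cmm (α x * (α y * a)) b)⁻¹ (phi hO (cmm (α y * a) b) ty) *
        Yg (α x * (α y * a)) b
        = Yg (α x * (α y * a)) b * phi hO (cmm (α y * a) b) ty := by
      rw [ymul hO α hαx (phi_mem hO α hαx _ (phi_mem hO α hαx _ htyS)) _ _, phi_inv_phi]
    calc x * y * Yg a b = x * (Yg (α y * a) b * phi hO (cmm (α y * a) b) ty) := by
          rw [c1, c2]
      _ = (x * Yg (α y * a) b) * phi hO (cmm (α y * a) b) ty := by rw [mul_assoc]
      _ = (tx * Yg (α x * (α y * a)) b) * phi hO (cmm (α y * a) b) ty := by rw [ex]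
      _ = tx * (Yg (α x * (α y * a)) b * phi hO (cmm (α y * a) b) ty) := by rw [mul_assoc]
      _ = tx * (phi hO (cmm (α x * (α y * a)) b)⁻¹ (phi hO (cmm (α y * a) b) ty) *
            Yg (α x * (α y * a)) b) := by rw [c4]
      _ = _ * Yg (α (x * y) * a) b := by
            rw [← mul_assoc]
            congr 2
            rw [map_mul]; group

/-- processing a word of S through a Y-letter by rel4 -/
lemma rel4w {t : CovS G O} (ht : t ∈ SS G O) :
    ∀ a b : G, ∃ t', t' ∈ SS G O ∧ Yg a b * t = Yg a ((α t)⁻¹ * b) * t' := by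
  induction ht using Subsemigroup.closure_induction with
  | mem x hx =>
    intro a b
    obtain ⟨m, rfl⟩ := hx
    refine ⟨Xg ⟨cnj (b * a⁻¹ * b⁻¹ * ↑m) ↑m, memc hO _ m⟩, xg_mem _, ?_⟩
    rw [R4 hO m a b, hαx]
  | mul x y hx hy ihx ihy =>
    intro a b
    obtain ⟨tx, htxS, ex⟩ := ihx a b
    obtain ⟨ty, htyS, ey⟩ := ihy a ((α x)⁻¹ * b)
    refine ⟨ty * phi hO (α y) tx,
      Subsemigroup.mul_mem _ htyS (phi_mem hO α hαx _ htxS), ?_⟩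
    calc Yg a b * (x * y) = (Yg a b * x) * y := by rw [mul_assoc]
      _ = Yg a ((α x)⁻¹ * b) * (tx * y) := by rw [ex, mul_assoc]
      _ = Yg a ((α x)⁻¹ * b) * (y * phi hO (α y) tx) := by
            rw [tmul hO α hαx hy htxS]
      _ = (Yg a ((α x)⁻¹ * b) * y) * phi hO (α y) tx := by rw [mul_assoc]
      _ = (Yg a ((α y)⁻¹ * ((α x)⁻¹ * b)) * ty) * phi hO (α y) tx := by rw [ey]
      _ = Yg a ((α (x * y))⁻¹ * b) * (ty * phi hO (α y) tx) := by
            rw [mul_assoc]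
            congr 2
            rw [map_mul]; group

end
end P17

namespace P17
variable {G : Type} [Group G] {O : Set G}

section
variable (hO : ∀ g ∈ O, ∀ h : G, h⁻¹ * g * h ∈ O)
variable (α : CovS G O →ₙ* G)
variable (hαx : ∀ g : {g : G // g ∈ O}, α (Xg g) = (g : G))
variable (hαy : ∀ a b : G, α (Yg a b) = a * b * a⁻¹ * b⁻¹)
include hO hαx

variable {g : G} (hg : g ∈ O) {s : CovS G O} (hs : s ∈ SS G O) (hαs : α s = g⁻¹)
include hs hαs

lemma block_alpha : α (Xg ⟨g, hg⟩ * s) = 1 := by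
  rw [map_mul, hαx, hαs]; simp

lemma block_central (d : CovS G O) :
    (Xg ⟨g, hg⟩ * s) * d = d * (Xg ⟨g, hg⟩ * s) :=
  central hO α hαx (Subsemigroup.mul_mem _ (xg_mem _) hs) (block_alpha hO α hαx hg hs hαs) d

/-- conjugation move using an adjacent X-letter context -/
lemma moveX (c : {g : G // g ∈ O}) :
    Xg c * (Xg ⟨g, hg⟩ * s) =
      Xg c * (Xg ⟨(c:G)⁻¹ * g * (c:G), hO g hg c⟩ * phi hO (c:G) s) := by
  have lhs : Xg c * (Xg ⟨g, hg⟩ * s) = Xg ⟨g, hg⟩ * (s * Xg c) := by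
    calc Xg c * (Xg ⟨g, hg⟩ * s) = (Xg c * Xg ⟨g, hg⟩) * s := by rw [mul_assoc]
      _ = (Xg ⟨g, hg⟩ * Xg ⟨cnj g (c:G), memc hO g c⟩) * s := by rw [R1 hO c ⟨g, hg⟩]
      _ = Xg ⟨g, hg⟩ * (s * Xg ⟨(α s)⁻¹ * (cnj g (c:G)) * α s,
            hO (cnj g (c:G)) (memc hO g c) (α s)⟩) := by
            rw [mul_assoc, xmul hO α hαx hs ⟨cnj g (c:G), memc hO g c⟩]
      _ = Xg ⟨g, hg⟩ * (s * Xg c) := by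
            congr 2
            exact xeq (by simp [cnj, hαs]; group)
  have rhs : Xg c * (Xg ⟨(c:G)⁻¹ * g * (c:G), hO g hg c⟩ * phi hO (c:G) s)
      = Xg ⟨g, hg⟩ * (s * Xg c) := by
    have e1 : Xg ⟨g, hg⟩ * Xg c = Xg c * Xg ⟨(c:G)⁻¹ * g * (c:G), hO g hg c⟩ :=
      (R1 hO ⟨g, hg⟩ c).trans (congrArg (fun z => Xg c * z) (xeq (by simp [cnj])))
    have e2 : s * Xg c = Xg c * phi hO (c:G) s := by
      have h0 := tmul hO α hαx (xg_mem c) hs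
      rw [h0, hαx c]
    calc Xg c * (Xg ⟨(c:G)⁻¹ * g * (c:G), hO g hg c⟩ * phi hO (c:G) s)
        = (Xg c * Xg ⟨(c:G)⁻¹ * g * (c:G), hO g hg c⟩) * phi hO (c:G) s :=
          (mul_assoc _ _ _).symm
      _ = (Xg ⟨g, hg⟩ * Xg c) * phi hO (c:G) s := by rw [e1]
      _ = Xg ⟨g, hg⟩ * (Xg c * phi hO (c:G) s) := by rw [mul_assoc]
      _ = Xg ⟨g, hg⟩ * (s * Xg c) := by rw [e2]
  rw [lhs, rhs]

/-- conjugation move by the commutator of an adjacent Y-letter -/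
lemma moveW (a b : G) :
    (Xg ⟨g, hg⟩ * s) * Yg a b =
      (Xg ⟨(cmm a b)⁻¹ * g * (cmm a b), hO g hg (cmm a b)⟩ * phi hO (cmm a b) s) * Yg a b := by
  have hBS : Xg ⟨g, hg⟩ * s ∈ SS G O := Subsemigroup.mul_mem _ (xg_mem _) hs
  have hB'S : Xg ⟨(cmm a b)⁻¹ * g * (cmm a b), hO g hg (cmm a b)⟩ * phi hO (cmm a b) s ∈ SS G O :=
    Subsemigroup.mul_mem _ (xg_mem _) (phi_mem hO α hαx _ hs)
  have e1 : phi hO (cmm a b) (Xg ⟨g, hg⟩ * s)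
      = Xg ⟨(cmm a b)⁻¹ * g * (cmm a b), hO g hg (cmm a b)⟩ * phi hO (cmm a b) s := by
    rw [phi_mul, phi_x]
  have e2 : α (Xg ⟨(cmm a b)⁻¹ * g * (cmm a b), hO g hg (cmm a b)⟩ * phi hO (cmm a b) s) = 1 := by
    rw [map_mul, hαx, alpha_phi hO α hαx _ hs, hαs]; group
  calc (Xg ⟨g, hg⟩ * s) * Yg a b = Yg a b * phi hO (cmm a b) (Xg ⟨g, hg⟩ * s) :=
        ymul hO α hαx hBS a b
    _ = Yg a b * (Xg ⟨(cmm a b)⁻¹ * g * (cmm a b), hO g hg (cmm a b)⟩ * phi hO (cmm a b) s) := by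
        rw [e1]
    _ = _ := (central hO α hαx hB'S e2 (Yg a b)).symm

/-- conjugation move by u = a b⁻¹ a⁻¹ of an adjacent Y-letter (rel3 processing) -/
lemma moveU (a b : G) :
    ∃ z, z ∈ SS G O ∧
    (Xg ⟨g, hg⟩ * s) * Yg a b =
      (Xg ⟨(a*b⁻¹*a⁻¹)⁻¹ * g * (a*b⁻¹*a⁻¹), hO g hg (a*b⁻¹*a⁻¹)⟩ * z) * Yg a b := by
  obtain ⟨s', hs'S, es'⟩ := rel3w hO α hαx hs a b
  set w₁ := cmm (g⁻¹ * a) b with hw₁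
  set w := cmm a b with hw
  refine ⟨phi hO w⁻¹ (phi hO w₁ s'),
    phi_mem hO α hαx _ (phi_mem hO α hαx _ hs'S), ?_⟩
  have e0 : (Yg (α s * a) b : CovS G O) = Yg (g⁻¹ * a) b := by rw [hαs]
  have c2 : s' * Yg (g⁻¹ * a) b = Yg (g⁻¹ * a) b * phi hO w₁ s' :=
    ymul hO α hαx hs'S _ _
  have c3 : Xg ⟨g, hg⟩ * Yg (g⁻¹ * a) b
      = Xg ⟨(a*b⁻¹*a⁻¹)⁻¹ * g * (a*b⁻¹*a⁻¹), hO g hg (a*b⁻¹*a⁻¹)⟩ * Yg a b := by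
    refine (R3 hO ⟨g, hg⟩ (g⁻¹ * a) b).trans ?_
    congr 1
    · exact xeq (by simp [cnj]; group)
    · congr 1; group
  have c4 : phi hO w⁻¹ (phi hO w₁ s') * Yg a b = Yg a b * phi hO w₁ s' := by
    rw [ymul hO α hαx (phi_mem hO α hαx _ (phi_mem hO α hαx _ hs'S)) a b, ← hw, phi_inv_phi]
  calc (Xg ⟨g, hg⟩ * s) * Yg a b = Xg ⟨g, hg⟩ * (s' * Yg (g⁻¹ * a) b) := by
        rw [mul_assoc, es', e0]
    _ = Xg ⟨g, hg⟩ * (Yg (g⁻¹ * a) b * phi hO w₁ s') := by rw [c2]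
    _ = (Xg ⟨g, hg⟩ * Yg (g⁻¹ * a) b) * phi hO w₁ s' := by rw [mul_assoc]
    _ = (Xg ⟨(a*b⁻¹*a⁻¹)⁻¹ * g * (a*b⁻¹*a⁻¹), hO g hg (a*b⁻¹*a⁻¹)⟩ * Yg a b) *
          phi hO w₁ s' := by rw [c3]
    _ = Xg ⟨(a*b⁻¹*a⁻¹)⁻¹ * g * (a*b⁻¹*a⁻¹), hO g hg (a*b⁻¹*a⁻¹)⟩ *
          (phi hO w⁻¹ (phi hO w₁ s') * Yg a b) := by rw [mul_assoc]; rw [c4]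
    _ = _ := (mul_assoc _ _ _).symm

/-- conjugation move by v = b a⁻¹ b⁻¹ of an adjacent Y-letter (rel4 processing) -/
lemma moveV (a b : G) :
    ∃ z, z ∈ SS G O ∧
    (Xg ⟨g, hg⟩ * s) * Yg a b =
      (Xg ⟨(b*a⁻¹*b⁻¹)⁻¹ * g * (b*a⁻¹*b⁻¹), hO g hg (b*a⁻¹*b⁻¹)⟩ * z) * Yg a b := by
  have hBS : Xg ⟨g, hg⟩ * s ∈ SS G O := Subsemigroup.mul_mem _ (xg_mem _) hs
  obtain ⟨s'', hs''S, es''⟩ := rel4w hO α hαx hs a (g⁻¹ * b)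
  refine ⟨phi hO ((b*a⁻¹*b⁻¹)⁻¹ * g * (b*a⁻¹*b⁻¹)) s'',
    phi_mem hO α hαx _ hs''S, ?_⟩
  set v := b*a⁻¹*b⁻¹ with hv
  have key : Yg a b * (Xg ⟨g, hg⟩ * s)
      = Yg a b * (Xg ⟨v⁻¹ * g * v, hO g hg v⟩ * phi hO (v⁻¹ * g * v) s'') := by
    have c1 : Yg a b * Xg ⟨g, hg⟩
        = Yg a (g⁻¹ * b) * Xg ⟨cnj (b*a⁻¹*b⁻¹*g) g, memc hO _ ⟨g, hg⟩⟩ :=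
      R4 hO ⟨g, hg⟩ a b
    have c2 : Xg ⟨cnj (b*a⁻¹*b⁻¹*g) g, memc hO _ ⟨g, hg⟩⟩ * s
        = s * Xg ⟨v⁻¹ * g * v, hO g hg v⟩ := by
      rw [xmul hO α hαx hs]
      exact congrArg (fun z => s * z) (xeq (by simp [cnj, hαs, hv]; group))
    have c3 : Yg a (g⁻¹ * b) * s = Yg a ((α s)⁻¹ * (g⁻¹ * b)) * s'' := es''
    have c4 : (Yg a ((α s)⁻¹ * (g⁻¹ * b)) : CovS G O) = Yg a b := by
      rw [hαs]; congr 1; group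
    have c5 : s'' * Xg ⟨v⁻¹ * g * v, hO g hg v⟩
        = Xg ⟨v⁻¹ * g * v, hO g hg v⟩ * phi hO (v⁻¹ * g * v) s'' := by
      have := tmul hO α hαx (xg_mem (⟨v⁻¹ * g * v, hO g hg v⟩ : {g : G // g ∈ O})) hs''S
      rwa [hαx] at this
    calc Yg a b * (Xg ⟨g, hg⟩ * s) = (Yg a b * Xg ⟨g, hg⟩) * s := by rw [mul_assoc]
      _ = Yg a (g⁻¹ * b) * (Xg ⟨cnj (b*a⁻¹*b⁻¹*g) g, memc hO _ ⟨g, hg⟩⟩ * s) := by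
            rw [c1, mul_assoc]
      _ = Yg a (g⁻¹ * b) * (s * Xg ⟨v⁻¹ * g * v, hO g hg v⟩) := by rw [c2]
      _ = (Yg a (g⁻¹ * b) * s) * Xg ⟨v⁻¹ * g * v, hO g hg v⟩ := (mul_assoc _ _ _).symm
      _ = (Yg a b * s'') * Xg ⟨v⁻¹ * g * v, hO g hg v⟩ := by rw [c3, c4]
      _ = Yg a b * (s'' * Xg ⟨v⁻¹ * g * v, hO g hg v⟩) := by rw [mul_assoc]
      _ = _ := by rw [c5]
  have hB'S : Xg ⟨v⁻¹ * g * v, hO g hg v⟩ * phi hO (v⁻¹ * g * v) s'' ∈ SS G O :=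
    Subsemigroup.mul_mem _ (xg_mem _) (phi_mem hO α hαx _ hs''S)
  have hB'α : α (Xg ⟨v⁻¹ * g * v, hO g hg v⟩ * phi hO (v⁻¹ * g * v) s'') = 1 := by
    have hgx : α (Xg (⟨g, hg⟩ : {g : G // g ∈ O})) = g := hαx _
    have hvx : α (Xg (⟨v⁻¹ * g * v, hO g hg v⟩ : {g : G // g ∈ O})) = v⁻¹ * g * v := hαx _
    have h2 := congrArg α key
    simp only [map_mul, hgx, hvx, hαs] at h2
    have h3 := mul_left_cancel h2
    rw [map_mul, hvx, ← h3]
    group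
  calc (Xg ⟨g, hg⟩ * s) * Yg a b = Yg a b * (Xg ⟨g, hg⟩ * s) :=
        block_central hO α hαx hg hs hαs (Yg a b)
    _ = Yg a b * (Xg ⟨v⁻¹ * g * v, hO g hg v⟩ * phi hO (v⁻¹ * g * v) s'') := key
    _ = _ := by
        rw [← central hO α hαx hB'S hB'α (Yg a b), mul_assoc]

end
end P17

namespace P17
variable {G : Type} [Group G] {O : Set G}

/-- the expression in the theorem -/
def EE (lst : List {g : G // g ∈ O}) (pairs : List (G × G)) (B : CovS G O) : CovS G O :=
  lst.foldr (fun x acc => Xg x * acc)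
    (pairs.foldl (fun acc p => acc * Yg p.1 p.2) B)

lemma foldl_mulright (ps : List (G × G)) :
    ∀ (r B : CovS G O), (∀ d, B * d = d * B) →
      ps.foldl (fun acc p => acc * Yg p.1 p.2) (r * B)
        = ps.foldl (fun acc p => acc * Yg p.1 p.2) r * B := by
  induction ps with
  | nil => intro r B _; rfl
  | cons p rest ih =>
    intro r B hBc
    show rest.foldl _ ((r * B) * Yg p.1 p.2) = _
    have : (r * B) * Yg p.1 p.2 = (r * Yg p.1 p.2) * B := by
      rw [mul_assoc, hBc (Yg p.1 p.2), ← mul_assoc]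
    rw [this, ih (r * Yg p.1 p.2) B hBc]
    rfl

lemma foldl_extract (p : G × G) (rest : List (G × G)) (B : CovS G O)
    (hBc : ∀ d, B * d = d * B) :
    (p :: rest).foldl (fun acc p => acc * Yg p.1 p.2) B
      = rest.foldl (fun acc p => acc * Yg p.1 p.2) (Yg p.1 p.2) * B := by
  show rest.foldl _ (B * Yg p.1 p.2) = _
  rw [hBc (Yg p.1 p.2), foldl_mulright rest (Yg p.1 p.2) B hBc]

lemma foldr_mulright (l : List {g : G // g ∈ O}) :
    ∀ (r B : CovS G O),
      l.foldr (fun x acc => Xg x * acc) (r * B)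
        = l.foldr (fun x acc => Xg x * acc) r * B := by
  induction l with
  | nil => intro r B; rfl
  | cons x t ih =>
    intro r B
    show Xg x * (t.foldr _ (r * B)) = (Xg x * t.foldr _ r) * B
    rw [ih r B, ← mul_assoc]

lemma foldr_extract (x : {g : G // g ∈ O}) (l : List {g : G // g ∈ O}) :
    ∃ R : CovS G O, ∀ B : CovS G O,
      (x :: l).foldr (fun x acc => Xg x * acc) B = R * B := by
  induction l generalizing x with
  | nil => exact ⟨Xg x, fun B => rfl⟩
  | cons y t ih =>
    obtain ⟨R', hR'⟩ := ih y
    refine ⟨Xg x * R', fun B => ?_⟩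
    show Xg x * ((y :: t).foldr _ B) = (Xg x * R') * B
    rw [hR' B, ← mul_assoc]

/-- transport of a block equality through the expression, Y-letter case -/
lemma transY {lst : List {g : G // g ∈ O}} {pairs : List (G × G)} {p : G × G}
    (hp : p ∈ pairs) {B B' : CovS G O}
    (hBc : ∀ d, B * d = d * B) (hB'c : ∀ d, B' * d = d * B')
    (hyp : B * Yg p.1 p.2 = B' * Yg p.1 p.2) :
    EE lst pairs B = EE lst pairs B' := by
  obtain ⟨l₁, l₂, rfl⟩ := List.append_of_mem hp
  unfold EE
  congr 1
  rw [List.foldl_append, List.foldl_append]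
  have key : List.foldl (fun acc p => acc * Yg p.1 p.2) B l₁ * Yg p.1 p.2
      = List.foldl (fun acc p => acc * Yg p.1 p.2) B' l₁ * Yg p.1 p.2 := by
    cases l₁ with
    | nil => exact hyp
    | cons q t =>
      rw [foldl_extract q t B hBc, foldl_extract q t B' hB'c]
      rw [mul_assoc, hyp, ← mul_assoc]
  show List.foldl _ (List.foldl _ B l₁ * Yg p.1 p.2) l₂
      = List.foldl _ (List.foldl _ B' l₁ * Yg p.1 p.2) l₂
  rw [key]

/-- transport of a block equality through the expression, X-letter case -/
lemma transX {lst : List {g : G // g ∈ O}} {pairs : List (G × G)}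
    {c : {g : G // g ∈ O}} (hc : c ∈ lst) {B B' : CovS G O}
    (hBc : ∀ d, B * d = d * B) (hB'c : ∀ d, B' * d = d * B')
    (hyp : Xg c * B = Xg c * B') :
    EE lst pairs B = EE lst pairs B' := by
  obtain ⟨l₁, l₂, rfl⟩ := List.append_of_mem hc
  unfold EE
  rw [List.foldr_append, List.foldr_append]
  have key : List.foldr (fun x acc => Xg x * acc)
        (List.foldl (fun acc p => acc * Yg p.1 p.2) B pairs) (c :: l₂)
      = List.foldr (fun x acc => Xg x * acc)
        (List.foldl (fun acc p => acc * Yg p.1 p.2) B' pairs) (c :: l₂) := by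
    have main : ∀ (K : CovS G O), Xg c * (K * B) = Xg c * (K * B') := by
      intro K
      rw [← hBc K, ← hB'c K, ← mul_assoc, ← mul_assoc, hyp]
    cases pairs with
    | nil =>
      show Xg c * (List.foldr _ B l₂) = Xg c * (List.foldr _ B' l₂)
      cases l₂ with
      | nil => exact hyp
      | cons y t =>
        obtain ⟨R, hR⟩ := foldr_extract y t
        rw [hR B, hR B']
        exact main R
    | cons q t =>
      show Xg c * (List.foldr _ (List.foldl _ B (q :: t)) l₂)
          = Xg c * (List.foldr _ (List.foldl _ B' (q :: t)) l₂)
      rw [foldl_extract q t B hBc, foldl_extract q t B' hB'c]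
      rw [foldr_mulright l₂ _ B, foldr_mulright l₂ _ B']
      exact main _
  rw [key]

end P17

namespace P17
variable {G : Type} [Group G] {O : Set G}

section
variable (hO : ∀ g ∈ O, ∀ h : G, h⁻¹ * g * h ∈ O)
variable (α : CovS G O →ₙ* G)
variable (hαx : ∀ g : {g : G // g ∈ O}, α (Xg g) = (g : G))
variable (lst : List {g : G // g ∈ O}) (pairs : List (G × G))

def Pp (h : G) : Prop :=
  ∀ (g : G) (hg : g ∈ O) (s : CovS G O), s ∈ SS G O → α s = g⁻¹ →
    ∃ z, z ∈ SS G O ∧ α z = (h⁻¹ * g * h)⁻¹ ∧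
      EE lst pairs (Xg ⟨g, hg⟩ * s) = EE lst pairs (Xg ⟨h⁻¹ * g * h, hO g hg h⟩ * z)

include hαx

lemma P_one : Pp hO α lst pairs 1 := by
  intro g hg s hs hαs
  refine ⟨s, hs, ?_, ?_⟩
  · rw [hαs]; group
  · have ex : Xg (⟨g, hg⟩ : {g : G // g ∈ O}) = Xg ⟨1⁻¹ * g * 1, hO g hg 1⟩ :=
      xeq (by group)
    rw [← ex]

lemma P_mul {h₁ h₂ : G} (P1 : Pp hO α lst pairs h₁) (P2 : Pp hO α lst pairs h₂) :
    Pp hO α lst pairs (h₁ * h₂) := by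
  intro g hg s hs hαs
  obtain ⟨z₁, hz₁, hαz₁, he₁⟩ := P1 g hg s hs hαs
  obtain ⟨z₂, hz₂, hαz₂, he₂⟩ := P2 (h₁⁻¹ * g * h₁) (hO g hg h₁) z₁ hz₁ hαz₁
  have ex : Xg (⟨h₂⁻¹ * (h₁⁻¹ * g * h₁) * h₂, hO (h₁⁻¹ * g * h₁) (hO g hg h₁) h₂⟩ :
      {g : G // g ∈ O}) = Xg ⟨(h₁ * h₂)⁻¹ * g * (h₁ * h₂), hO g hg (h₁ * h₂)⟩ :=
    xeq (by group)
  refine ⟨z₂, hz₂, ?_, ?_⟩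
  · rw [hαz₂]; group
  · rw [he₁, he₂, ex]

lemma P_congr {h h' : G} (hag : ∀ x ∈ O, h⁻¹ * x * h = h'⁻¹ * x * h')
    (Ph : Pp hO α lst pairs h) : Pp hO α lst pairs h' := by
  intro g hg s hs hαs
  obtain ⟨z, hz, hαz, he⟩ := Ph g hg s hs hαs
  have hv := hag g hg
  have ex : Xg (⟨h⁻¹ * g * h, hO g hg h⟩ : {g : G // g ∈ O})
      = Xg ⟨h'⁻¹ * g * h', hO g hg h'⟩ := xeq hv
  refine ⟨z, hz, ?_, ?_⟩
  · rw [hαz, hv]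
  · rw [he, ex]

lemma P_pow {h : G} (Ph : Pp hO α lst pairs h) :
    ∀ n : ℕ, Pp hO α lst pairs (h ^ (n + 1)) := by
  intro n
  induction n with
  | zero => rw [pow_one]; exact Ph
  | succ k ih =>
    rw [pow_succ]
    exact P_mul hO α hαx lst pairs ih Ph

lemma P_inv (hOfin : O.Finite) {h : G} (Ph : Pp hO α lst pairs h) :
    Pp hO α lst pairs h⁻¹ := by
  classical
  haveI : Fintype {x : G // x ∈ O} := hOfin.fintype
  let σ : Equiv.Perm {x : G // x ∈ O} :=
    { toFun := fun x => ⟨h⁻¹ * x * h, hO x x.2 h⟩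
      invFun := fun x => ⟨h * x * h⁻¹, by simpa using hO x x.2 h⁻¹⟩
      left_inv := fun x => Subtype.ext (by simp; group)
      right_inv := fun x => Subtype.ext (by simp; group) }
  have hM := pow_orderOf_eq_one σ
  set M := orderOf σ with hMdef
  have hMpos : 0 < M := orderOf_pos σ
  have hpow : ∀ (k : ℕ) (x : {x : G // x ∈ O}),
      (((σ ^ k) x : {x : G // x ∈ O}) : G) = (h ^ k)⁻¹ * x * (h ^ k) := by
    intro k
    induction k with
    | zero => intro x; simp
    | succ n ih =>
      intro x
      rw [pow_succ, Equiv.Perm.mul_apply, ih (σ x)]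
      have : ((σ x : {x : G // x ∈ O}) : G) = h⁻¹ * x * h := rfl
      rw [this, pow_succ h]
      group
  have hfix : ∀ x : {x : G // x ∈ O}, (h ^ M)⁻¹ * x * (h ^ M) = (x : G) := by
    intro x
    have h0 := hpow M x
    rw [hM] at h0
    simpa using h0.symm
  have hPk : Pp hO α lst pairs (h ^ (M - 1)) := by
    rcases Nat.exists_eq_add_of_lt hMpos with ⟨n, hn⟩
    rcases hn1 : M - 1 with _ | n
    · rw [pow_zero]; exact P_one hO α hαx lst pairs
    · exact P_pow hO α hαx lst pairs Ph n
  refine P_congr hO α hαx lst pairs ?_ hPk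
  intro x hx
  have h1 := hfix ⟨x, hx⟩
  have hM' : h ^ M = h ^ (M - 1) * h := by
    rw [← pow_succ]
    congr 1
    omega
  rw [hM'] at h1
  calc (h ^ (M - 1))⁻¹ * x * h ^ (M - 1)
      = h * ((h ^ (M - 1) * h)⁻¹ * x * (h ^ (M - 1) * h)) * h⁻¹ := by group
    _ = (h⁻¹)⁻¹ * x * h⁻¹ := by rw [h1]; group

end
end P17

namespace P17
variable {G : Type} [Group G] {O : Set G}

section
variable (hO : ∀ g ∈ O, ∀ h : G, h⁻¹ * g * h ∈ O)
variable (α : CovS G O →ₙ* G)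
variable (hαx : ∀ g : {g : G // g ∈ O}, α (Xg g) = (g : G))
variable (lst : List {g : G // g ∈ O}) (pairs : List (G × G))
include hO hαx

lemma block_central' {g : G} (hg : g ∈ O) {s : CovS G O} (hs : s ∈ SS G O)
    (hαs : α s = g⁻¹) (d : CovS G O) :
    (Xg ⟨g, hg⟩ * s) * d = d * (Xg ⟨g, hg⟩ * s) :=
  central hO α hαx (Subsemigroup.mul_mem _ (xg_mem _) hs)
    (by rw [map_mul, hαx, hαs]; group) d

lemma P_genX {c : {g : G // g ∈ O}} (hc : c ∈ lst) :
    Pp hO α lst pairs (c : G) := by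
  intro g hg s hs hαs
  have hzS : phi hO (c : G) s ∈ SS G O := phi_mem hO α hαx _ hs
  have hαz : α (phi hO (c : G) s) = ((c : G)⁻¹ * g * (c : G))⁻¹ := by
    rw [alpha_phi hO α hαx _ hs, hαs]; group
  refine ⟨phi hO (c : G) s, hzS, hαz, ?_⟩
  exact transX hc (block_central' hO α hαx hg hs hαs)
    (block_central' hO α hαx (hO g hg c) hzS hαz)
    (moveX hO α hαx hg hs hαs c)

lemma P_fromMoveY {p : G × G} (hp : p ∈ pairs) (h : G)
    {g : G} (hg : g ∈ O) {s : CovS G O} (hs : s ∈ SS G O) (hαs : α s = g⁻¹)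
    {z : CovS G O} (hzS : z ∈ SS G O)
    (hyp : (Xg ⟨g, hg⟩ * s) * Yg p.1 p.2
      = (Xg ⟨h⁻¹ * g * h, hO g hg h⟩ * z) * Yg p.1 p.2) :
    α z = (h⁻¹ * g * h)⁻¹ ∧
      EE lst pairs (Xg ⟨g, hg⟩ * s) = EE lst pairs (Xg ⟨h⁻¹ * g * h, hO g hg h⟩ * z) := by
  have hB'1 : α (Xg ⟨h⁻¹ * g * h, hO g hg h⟩ * z) = 1 := by
    have h2 := congrArg α hyp
    simp only [map_mul] at h2
    have h3 := mul_right_cancel h2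
    rw [map_mul, ← h3, hαx, hαs]
    group
  have hαz : α z = (h⁻¹ * g * h)⁻¹ := by
    rw [map_mul, hαx] at hB'1
    exact eq_inv_of_mul_eq_one_right hB'1
  have hB'c : ∀ d, (Xg ⟨h⁻¹ * g * h, hO g hg h⟩ * z) * d
      = d * (Xg ⟨h⁻¹ * g * h, hO g hg h⟩ * z) :=
    central hO α hαx (Subsemigroup.mul_mem _ (xg_mem _) hzS) hB'1
  exact ⟨hαz,
    transY hp (block_central' hO α hαx hg hs hαs) hB'c hyp⟩

lemma P_genW {p : G × G} (hp : p ∈ pairs) :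
    Pp hO α lst pairs (cmm p.1 p.2) := by
  intro g hg s hs hαs
  obtain ⟨hαz', he⟩ := P_fromMoveY hO α hαx lst pairs hp (cmm p.1 p.2) hg hs hαs
    (phi_mem hO α hαx (cmm p.1 p.2) hs) (moveW hO α hαx hg hs hαs p.1 p.2)
  exact ⟨_, phi_mem hO α hαx (cmm p.1 p.2) hs, hαz', he⟩

lemma P_genU {p : G × G} (hp : p ∈ pairs) :
    Pp hO α lst pairs (p.1 * p.2⁻¹ * p.1⁻¹) := by
  intro g hg s hs hαs
  obtain ⟨z, hzS, hyp⟩ := moveU hO α hαx hg hs hαs p.1 p.2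
  obtain ⟨hαz', he⟩ :=
    P_fromMoveY hO α hαx lst pairs hp (p.1 * p.2⁻¹ * p.1⁻¹) hg hs hαs hzS hyp
  exact ⟨z, hzS, hαz', he⟩

lemma P_genV {p : G × G} (hp : p ∈ pairs) :
    Pp hO α lst pairs (p.2 * p.1⁻¹ * p.2⁻¹) := by
  intro g hg s hs hαs
  obtain ⟨z, hzS, hyp⟩ := moveV hO α hαx hg hs hαs p.1 p.2
  obtain ⟨hαz', he⟩ :=
    P_fromMoveY hO α hαx lst pairs hp (p.2 * p.1⁻¹ * p.2⁻¹) hg hs hαs hzS hyp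
  exact ⟨z, hzS, hαz', he⟩

lemma P_genA (hOfin : O.Finite) {p : G × G} (hp : p ∈ pairs) :
    Pp hO α lst pairs p.1 := by
  have Pw := P_genW hO α hαx lst pairs hp
  have Pv := P_genV hO α hαx lst pairs hp
  have Pvi := P_inv hO α hαx lst pairs hOfin Pv
  have := P_mul hO α hαx lst pairs Pw Pvi
  have e : cmm p.1 p.2 * (p.2 * p.1⁻¹ * p.2⁻¹)⁻¹ = p.1 := by rw [cmm]; group
  rwa [e] at this

lemma P_genB (hOfin : O.Finite) {p : G × G} (hp : p ∈ pairs) :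
    Pp hO α lst pairs p.2 := by
  have Pw := P_genW hO α hαx lst pairs hp
  have Pu := P_genU hO α hαx lst pairs hp
  have Pwi := P_inv hO α hαx lst pairs hOfin Pw
  have Pui := P_inv hO α hαx lst pairs hOfin Pu
  have := P_mul hO α hαx lst pairs Pwi Pui
  have e : (cmm p.1 p.2)⁻¹ * (p.1 * p.2⁻¹ * p.1⁻¹)⁻¹ = p.2 := by simp [cmm]; group
  rwa [e] at this

end
end P17

theorem stmt17 (G : Type) [Group G] (O : Set G) (h1 : (1 : G) ∉ O)
    (hOfin : O.Finite)
    (hO : ∀ g ∈ O, ∀ h : G, h⁻¹ * g * h ∈ O)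
    (α : CovS G O →ₙ* G)
    (hαx : ∀ g : {g : G // g ∈ O}, α (Xg g) = (g : G))
    (hαy : ∀ a b : G, α (Yg a b) = a * b * a⁻¹ * b⁻¹)
    (lst : List {g : G // g ∈ O}) (pairs : List (G × G))
    (g : G) (hg : g ∈ O) (h : G)
    (hh : h ∈ Subgroup.closure
      ({x : G | x ∈ lst.map Subtype.val} ∪
        {x : G | ∃ p ∈ pairs, x = p.1 ∨ x = p.2}))
    (s : CovS G O)
    (hs : s ∈ Subsemigroup.closure (Set.range (Xg : {g : G // g ∈ O} → CovS G O)))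
    (hαs : α s = g⁻¹) :
    ∃ z ∈ Subsemigroup.closure (Set.range (Xg : {g : G // g ∈ O} → CovS G O)),
      lst.foldr (fun x acc => Xg x * acc)
          (pairs.foldl (fun acc p => acc * Yg p.1 p.2) (Xg ⟨g, hg⟩ * s)) =
        lst.foldr (fun x acc => Xg x * acc)
          (pairs.foldl (fun acc p => acc * Yg p.1 p.2)
            (Xg ⟨h⁻¹ * g * h, hO g hg h⟩ * z)) := by
  have main : P17.Pp hO α lst pairs h := by
    induction hh using Subgroup.closure_induction with
    | mem x hx =>
      rcases hx with hx | hx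
      · simp only [Set.mem_setOf_eq, List.mem_map] at hx
        obtain ⟨c, hc, rfl⟩ := hx
        exact P17.P_genX hO α hαx lst pairs hc
      · obtain ⟨p, hp, hx⟩ := hx
        rcases hx with rfl | rfl
        · exact P17.P_genA hO α hαx lst pairs hOfin hp
        · exact P17.P_genB hO α hαx lst pairs hOfin hp
    | one => exact P17.P_one hO α hαx lst pairs
    | mul x y hx hy ihx ihy => exact P17.P_mul hO α hαx lst pairs ihx ihy
    | inv x hx ih => exact P17.P_inv hO α hαx lst pairs hOfin ih
  obtain ⟨z, hzS, hαz, he⟩ := main g hg s hs hαs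
  exact ⟨z, hzS, he⟩
end
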